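/- arXiv:1111.0241 — 6 statements merged into one kernel-verified Lean document; each statement's English description precedes it below -/
import Mathlib

section
/- Let f : ℕ → ℝ, and suppose the sequences of quasiperiodic functions (c_r)_{r≥0} and (c′_r)_{r≥0} are both a.p.p.s. expansions of f. Then c_r(n) = c′_r(n) for every integer r ≥ 0 and every positive integer n. -/
/-- A function `ℝ → ℝ` is quasiperiodic if it is a sum of finitely many
continuous periodic functions. -/
def Quasiperiodic (ω : ℝ → ℝ) : Prop :=
  ∃ (k : ℕ) (f : Fin k → ℝ → ℝ) (p : Fin k → ℝ),
    (∀ i, Continuous (f i)) ∧ (∀ i, 0 < p i ∧ Function.Periodic (f i) (p i)) ∧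
    ω = fun t => ∑ i, f i t

/-- `c` is an asymptotic pseudo-power series (a.p.p.s.) expansion of `f`. -/
def IsAPPS (f : ℕ → ℝ) (c : ℕ → ℝ → ℝ) : Prop :=
  (∀ r, Quasiperiodic (c r)) ∧
  ∀ k : ℕ, 1 ≤ k → ∃ C : ℝ, ∀ n : ℕ, 1 ≤ n →
    |f n - ∑ r ∈ Finset.range k, c r n / (n : ℝ) ^ r| ≤ C / (n : ℝ) ^ k

lemma recur (k : ℕ) (p : Fin k → ℝ) (hp : ∀ i, 0 < p i) {δ : ℝ} (hδ : 0 < δ) (M : ℕ) :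
    ∃ m : ℕ, M ≤ m ∧ ∀ i, ∃ z : ℤ, |(m : ℝ) - z * p i| < δ := by
  obtain ⟨P, hP⟩ := Finite.exists_le p
  set P' : ℝ := max P 1 with hP'def
  have hP'pos : (0:ℝ) < P' := lt_of_lt_of_le one_pos (le_max_right _ _)
  set δ' : ℝ := δ / P' with hδ'def
  have hδ'pos : 0 < δ' := div_pos hδ hP'pos
  set M' : ℕ := max M 1 with hM'def
  have hM'pos : 1 ≤ M' := le_max_right _ _
  set v : ℕ → Fin k → ℝ := fun j i => Int.fract (((j * M' : ℕ) : ℝ) / p i) with hv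
  have hvmem : ∀ j, v j ∈ Set.pi Set.univ (fun _ : Fin k => Set.Icc (0:ℝ) 1) := by
    intro j i _
    exact ⟨Int.fract_nonneg _, le_of_lt (Int.fract_lt_one _)⟩
  have hcomp : IsCompact (Set.pi Set.univ (fun _ : Fin k => Set.Icc (0:ℝ) 1)) :=
    isCompact_univ_pi fun _ => isCompact_Icc
  obtain ⟨x, -, φ, hφ, hlim⟩ := hcomp.tendsto_subseq hvmem
  rw [Metric.tendsto_atTop] at hlim
  obtain ⟨N, hN⟩ := hlim (δ'/2) (by positivity)
  have hmono : φ N < φ (N + 1) := hφ (Nat.lt_succ_self N)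
  refine ⟨(φ (N+1) - φ N) * M', ?_, ?_⟩
  · calc M ≤ M' := le_max_left _ _
      _ = 1 * M' := (one_mul _).symm
      _ ≤ (φ (N+1) - φ N) * M' := Nat.mul_le_mul_right _ (by omega)
  · intro i
    have hpi := hp i
    set a1 : ℝ := ((φ N * M' : ℕ) : ℝ) / p i with ha1
    set a2 : ℝ := ((φ (N+1) * M' : ℕ) : ℝ) / p i with ha2
    refine ⟨⌊a2⌋ - ⌊a1⌋, ?_⟩
    have hcast : (((φ (N+1) - φ N) * M' : ℕ) : ℝ) = p i * a2 - p i * a1 := by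
      rw [ha1, ha2, mul_div_cancel₀ _ (ne_of_gt hpi), mul_div_cancel₀ _ (ne_of_gt hpi)]
      push_cast [Nat.cast_sub (le_of_lt hmono)]
      ring
    have key : (((φ (N+1) - φ N) * M' : ℕ) : ℝ) - ((⌊a2⌋ - ⌊a1⌋ : ℤ) : ℝ) * p i
        = p i * (Int.fract a2 - Int.fract a1) := by
      rw [hcast, Int.fract, Int.fract]
      push_cast
      ring
    rw [key, abs_mul, abs_of_pos hpi]
    have hdist : dist (v (φ (N+1))) (v (φ N)) < δ' := by
      calc dist (v (φ (N+1))) (v (φ N)) ≤ dist (v (φ (N+1))) x + dist (v (φ N)) x :=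
            dist_triangle_right _ _ _
        _ < δ'/2 + δ'/2 := add_lt_add (hN (N+1) (Nat.le_succ N)) (hN N le_rfl)
        _ = δ' := by ring
    have hco : |Int.fract a2 - Int.fract a1| < δ' := by
      have h1 := lt_of_le_of_lt (dist_le_pi_dist (v (φ (N+1))) (v (φ N)) i) hdist
      rw [Real.dist_eq] at h1
      exact h1
    calc p i * |Int.fract a2 - Int.fract a1| ≤ P' * |Int.fract a2 - Int.fract a1| := by
          have : p i ≤ P' := le_trans (hP i) (le_max_left _ _)
          exact mul_le_mul_of_nonneg_right this (abs_nonneg _)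
      _ < P' * δ' := by exact mul_lt_mul_of_pos_left hco hP'pos
      _ = δ := by rw [hδ'def]; field_simp

lemma vanish (g : ℝ → ℝ) (hg : Quasiperiodic g)
    (h0 : ∀ ε : ℝ, 0 < ε → ∃ N : ℕ, ∀ m : ℕ, N ≤ m → |g m| ≤ ε) :
    ∀ n : ℕ, g n = 0 := by
  obtain ⟨k, fn, p, hcont, hper, rfl⟩ := hg
  intro n
  show ∑ i, fn i (n:ℝ) = 0
  have key : ∀ ε : ℝ, 0 < ε → |∑ i, fn i (n:ℝ)| ≤ 2 * ε := by
    intro ε hε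
    set ε' : ℝ := ε / (k + 1) with hε'def
    have hε'pos : 0 < ε' := by positivity
    have hF : Continuous (fun t : ℝ => fun i : Fin k => fn i t) :=
      continuous_pi hcont
    have hFat : ContinuousAt (fun t : ℝ => fun i : Fin k => fn i t) (n : ℝ) := hF.continuousAt
    rw [Metric.continuousAt_iff] at hFat
    obtain ⟨δ, hδpos, hδ⟩ := hFat ε' hε'pos
    obtain ⟨N, hN⟩ := h0 ε hε
    obtain ⟨m, hmN, hz⟩ := recur k p (fun i => (hper i).1) hδpos N
    choose z hzlt using hz
    have hval : ∀ i, fn i ((n + m : ℕ) : ℝ) = fn i ((n:ℝ) + ((m:ℝ) - z i * p i)) := by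
      intro i
      have h1 := (hper i).2.sub_int_mul_eq (x := ((n + m : ℕ):ℝ)) (z i)
      rw [← h1]
      congr 1
      push_cast
      ring
    have hclose : ∀ i, |fn i ((n+m:ℕ):ℝ) - fn i (n:ℝ)| < ε' := by
      intro i
      rw [hval i]
      have hy : dist ((n:ℝ) + ((m:ℝ) - z i * p i)) (n:ℝ) < δ := by
        rw [Real.dist_eq]
        simpa using hzlt i
      have h2 := hδ hy
      have h3 := lt_of_le_of_lt
        (dist_le_pi_dist (fun j => fn j ((n:ℝ) + ((m:ℝ) - z i * p i))) (fun j => fn j (n:ℝ)) i) h2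
      rwa [Real.dist_eq] at h3
    have hsum : |∑ i, fn i ((n+m:ℕ):ℝ) - ∑ i, fn i (n:ℝ)| ≤ ε := by
      rw [← Finset.sum_sub_distrib]
      calc |∑ i, (fn i ((n+m:ℕ):ℝ) - fn i (n:ℝ))|
          ≤ ∑ i, |fn i ((n+m:ℕ):ℝ) - fn i (n:ℝ)| := Finset.abs_sum_le_sum_abs _ _
        _ ≤ ∑ _i : Fin k, ε' := Finset.sum_le_sum fun i _ => le_of_lt (hclose i)
        _ = k * ε' := by simp [mul_comm]
        _ ≤ ((k:ℝ) + 1) * ε' := by gcongr <;> linarith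
        _ = ε := by rw [hε'def]; field_simp
    have hgm : |∑ i, fn i ((n+m:ℕ):ℝ)| ≤ ε := hN (n+m) (le_trans hmN (Nat.le_add_left m n))
    calc |∑ i, fn i (n:ℝ)|
        ≤ |∑ i, fn i (n:ℝ) - ∑ i, fn i ((n+m:ℕ):ℝ)| + |∑ i, fn i ((n+m:ℕ):ℝ)| := by
          have := abs_add_le (∑ i, fn i (n:ℝ) - ∑ i, fn i ((n+m:ℕ):ℝ)) (∑ i, fn i ((n+m:ℕ):ℝ))
          simpa using this
      _ ≤ ε + ε := add_le_add (by rwa [abs_sub_comm] at hsum) hgm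
      _ = 2 * ε := by ring
  by_contra hne
  have h1 : 0 < |∑ i, fn i (n:ℝ)| := abs_pos.mpr hne
  have h2 := key (|∑ i, fn i (n:ℝ)| / 4) (by positivity)
  linarith

lemma aux_vanish : ∀ (r : ℕ) (d : ℕ → ℝ → ℝ), (∀ j, Quasiperiodic (d j)) →
    (∀ k : ℕ, 1 ≤ k → ∃ C : ℝ, ∀ n : ℕ, 1 ≤ n →
      |∑ j ∈ Finset.range k, d j n / (n:ℝ) ^ j| ≤ C / (n:ℝ) ^ k) →
    ∀ r' ≤ r, ∀ n : ℕ, 1 ≤ n → d r' n = 0 := by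
  intro r
  induction r with
  | zero =>
    intro d hq hb r' hr' n hn
    have hr0 : r' = 0 := Nat.le_zero.mp hr'
    subst hr0
    obtain ⟨C, hC⟩ := hb 1 le_rfl
    have hC' : ∀ m : ℕ, 1 ≤ m → |d 0 m| ≤ C / m := by
      intro m hm
      have := hC m hm
      simpa using this
    have h0 : ∀ ε : ℝ, 0 < ε → ∃ N : ℕ, ∀ m : ℕ, N ≤ m → |d 0 m| ≤ ε := by
      intro ε hε
      refine ⟨⌈C/ε⌉₊ + 1, fun m hm => ?_⟩
      have hm1 : 1 ≤ m := le_trans (Nat.le_add_left 1 _) hm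
      have hmpos : (0:ℝ) < m := by exact_mod_cast hm1
      have hceil : C / ε ≤ (m:ℝ) := by
        refine le_trans (Nat.le_ceil _) ?_
        exact_mod_cast le_trans (Nat.le_succ _) hm
      have hCle : C ≤ ε * m := by
        have := (div_le_iff₀ hε).mp hceil
        linarith
      calc |d 0 m| ≤ C / m := hC' m hm1
        _ ≤ ε := by rw [div_le_iff₀ hmpos]; linarith
    exact vanish (d 0) (hq 0) h0 n
  | succ r ih =>
    intro d hq hb r' hr' n hn
    by_cases hc : r' ≤ r
    · exact ih d hq hb r' hc n hn
    have hr'eq : r' = r + 1 := by omega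
    subst hr'eq
    have h0 : ∀ m : ℕ, 1 ≤ m → d 0 m = 0 := fun m hm => ih d hq hb 0 (Nat.zero_le r) m hm
    have hb' : ∀ k : ℕ, 1 ≤ k → ∃ C : ℝ, ∀ m : ℕ, 1 ≤ m →
        |∑ j ∈ Finset.range k, d (j+1) m / (m:ℝ) ^ j| ≤ C / (m:ℝ) ^ k := by
      intro k hk
      obtain ⟨C, hC⟩ := hb (k+1) (Nat.le_add_left 1 k)
      refine ⟨C, fun m hm => ?_⟩
      have hmpos : (0:ℝ) < m := by exact_mod_cast hm
      have hsum : ∑ j ∈ Finset.range (k+1), d j m / (m:ℝ) ^ j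
          = (∑ j ∈ Finset.range k, d (j+1) m / (m:ℝ) ^ j) / m := by
        rw [Finset.sum_range_succ', h0 m hm]
        simp only [pow_zero, div_one, zero_div, add_zero]
        rw [Finset.sum_div]
        refine Finset.sum_congr rfl fun j _ => ?_
        rw [pow_succ]
        ring
      have h1 := hC m hm
      rw [hsum, abs_div, abs_of_pos hmpos, div_le_div_iff₀ hmpos (pow_pos hmpos (k+1))] at h1
      rw [le_div_iff₀ (pow_pos hmpos k)]
      rw [pow_succ, ← mul_assoc] at h1
      exact le_of_mul_le_mul_right h1 hmpos
    exact ih (fun j => d (j+1)) (fun j => hq (j+1)) hb' r le_rfl n hn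

lemma Quasiperiodic.sub {ω ω' : ℝ → ℝ} (h : Quasiperiodic ω) (h' : Quasiperiodic ω') :
    Quasiperiodic (fun t => ω t - ω' t) := by
  obtain ⟨k, f, p, hc, hp, rfl⟩ := h
  obtain ⟨k', f', p', hc', hp', rfl⟩ := h'
  refine ⟨k + k', Fin.addCases f (fun i t => -(f' i t)), Fin.addCases p p', ?_, ?_, ?_⟩
  · intro i
    induction i using Fin.addCases with
    | left i => simpa [Fin.addCases_left] using hc i
    | right i => simp only [Fin.addCases_right]; exact (hc' i).neg
  · intro i
    induction i using Fin.addCases with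
    | left i => simpa [Fin.addCases_left] using hp i
    | right i =>
      refine ⟨by simpa [Fin.addCases_right] using (hp' i).1, ?_⟩
      intro t
      simp [Fin.addCases_right, (hp' i).2 t]
  · funext t
    rw [Fin.sum_univ_add]
    simp [Fin.addCases_left, Fin.addCases_right, Finset.sum_neg_distrib, sub_eq_add_neg]

theorem stmt2 (f : ℕ → ℝ) (c c' : ℕ → ℝ → ℝ)
    (h : IsAPPS f c) (h' : IsAPPS f c') :
    ∀ r : ℕ, ∀ n : ℕ, 1 ≤ n → c r n = c' r n := by
  obtain ⟨hq, hb⟩ := h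
  obtain ⟨hq', hb'⟩ := h'
  intro r n hn
  set d : ℕ → ℝ → ℝ := fun j t => c j t - c' j t with hd
  have hdq : ∀ j, Quasiperiodic (d j) := fun j => (hq j).sub (hq' j)
  have hdb : ∀ k : ℕ, 1 ≤ k → ∃ C : ℝ, ∀ m : ℕ, 1 ≤ m →
      |∑ j ∈ Finset.range k, d j m / (m:ℝ) ^ j| ≤ C / (m:ℝ) ^ k := by
    intro k hk
    obtain ⟨C, hC⟩ := hb k hk
    obtain ⟨C', hC'⟩ := hb' k hk
    refine ⟨C + C', fun m hm => ?_⟩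
    have heq : ∑ j ∈ Finset.range k, d j m / (m:ℝ) ^ j
        = (f m - ∑ j ∈ Finset.range k, c' j m / (m:ℝ) ^ j)
          - (f m - ∑ j ∈ Finset.range k, c j m / (m:ℝ) ^ j) := by
      simp only [hd, sub_div, Finset.sum_sub_distrib]
      ring
    rw [heq, add_div]
    calc |_ - _| ≤ |f ↑m - ∑ j ∈ Finset.range k, c' j ↑m / (↑m:ℝ) ^ j|
          + |f ↑m - ∑ j ∈ Finset.range k, c j ↑m / (↑m:ℝ) ^ j| := abs_sub _ _
      _ ≤ C / (m:ℝ)^k + C' / (m:ℝ)^k := by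
          rw [add_comm (C / (m:ℝ)^k)]
          exact add_le_add (hC' m hm) (hC m hm)
      _ = C / (m:ℝ)^k + C' / (m:ℝ)^k := rfl
  have := aux_vanish r d hdq hdb r le_rfl n hn
  have h2 : c r n - c' r n = 0 := this
  linarith
end

section
/- Let ω : ℝ → ℝ be a quasiperiodic function, and suppose the sequence (ω(n))_{n ∈ ℕ} converges to a finite limit as n → ∞. Then ω is constant on the positive integers, i.e., ω(n) = ω(m) for all positive integers n and m. -/
theorem stmt9 (ω : ℝ → ℝ) (hω : Quasiperiodic ω) (L : ℝ)
    (hlim : Filter.Tendsto (fun n : ℕ => ω n) Filter.atTop (nhds L)) :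
    ∀ n m : ℕ, 1 ≤ n → 1 ≤ m → ω n = ω m := by
  suffices h : ∀ n : ℕ, ω n = L by
    intro n m _ _; rw [h n, h m]
  intro n
  obtain ⟨k, f, p, hcont, hp, hωeq⟩ := hω
  haveI : ∀ i, Fact (0 < p i) := fun i => ⟨(hp i).1⟩
  set u : ℕ → (∀ i : Fin k, AddCircle (p i)) := fun j i => ((j : ℝ) : AddCircle (p i)) with hu
  obtain ⟨x, -, φ, hφmono, hφconv⟩ :=
    isCompact_univ.tendsto_subseq (fun j => Set.mem_univ (u j))
  have hcauchy : CauchySeq (u ∘ φ) := hφconv.cauchySeq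
  have key : ∀ δ > (0:ℝ), ∀ M : ℕ, ∃ d : ℕ, M ≤ d ∧ ∀ i, ‖((d : ℝ) : AddCircle (p i))‖ < δ := by
    intro δ hδ M
    obtain ⟨N, hN⟩ := Metric.cauchySeq_iff.mp hcauchy δ hδ
    set b := N + M + φ N with hb
    have hb1 : b ≤ φ b := hφmono.le_apply
    refine ⟨φ b - φ N, by omega, ?_⟩
    intro i
    have h1 : dist ((u ∘ φ) b) ((u ∘ φ) N) < δ := hN b (by omega) N le_rfl
    have h2 : dist (u (φ b) i) (u (φ N) i) < δ :=
      lt_of_le_of_lt (dist_le_pi_dist (u (φ b)) (u (φ N)) i) h1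
    have h3 : (((φ b - φ N : ℕ) : ℝ) : AddCircle (p i)) = u (φ b) i - u (φ N) i := by
      simp only [hu]
      rw [Nat.cast_sub (by omega), ← QuotientAddGroup.mk_sub]
    rw [h3, ← dist_eq_norm]
    exact h2
  have main : ∀ ε > (0:ℝ), ∀ M : ℕ, ∃ m : ℕ, M ≤ m ∧ |ω m - ω n| < ε := by
    intro ε hε M
    set ε' : ℝ := ε / (k + 1) with hε'
    have hε'0 : 0 < ε' := by positivity
    set F : ℝ → (Fin k → ℝ) := fun t i => f i t with hF
    have hFc : ContinuousAt F (n : ℝ) := (continuous_pi hcont).continuousAt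
    obtain ⟨δ, hδ0, hδ⟩ := Metric.continuousAt_iff.mp hFc ε' hε'0
    obtain ⟨d, hdM, hd⟩ := key δ hδ0 M
    refine ⟨n + d, by omega, ?_⟩
    have hterm : ∀ i, |f i (n + d : ℕ) - f i n| ≤ ε' := by
      intro i
      set R : ℤ := round ((p i)⁻¹ * d) with hR
      set z : ℝ := (d : ℝ) - R * p i with hz
      have hznorm : |z| < δ := by
        have := hd i
        rwa [AddCircle.norm_eq] at this
      have hfz : f i ((n : ℝ) + d) = f i ((n : ℝ) + z) := by
        have := ((hp i).2.zsmul R) ((n : ℝ) + z)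
        rw [zsmul_eq_mul] at this
        rw [← this]
        congr 1; rw [hz]; ring
      have hnear : dist ((n : ℝ) + z) (n : ℝ) < δ := by
        rw [Real.dist_eq]; simpa using hznorm
      have hcoord : dist (F ((n:ℝ) + z) i) (F (n:ℝ) i) < ε' :=
        lt_of_le_of_lt (dist_le_pi_dist _ _ i) (hδ hnear)
      have : |f i ((n:ℝ) + z) - f i n| < ε' := by
        rw [← Real.dist_eq]; exact hcoord
      calc |f i (((n + d : ℕ) : ℝ)) - f i n| = |f i ((n:ℝ) + z) - f i n| := by
            push_cast; rw [hfz]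
        _ ≤ ε' := this.le
    have hsum : |ω (n + d : ℕ) - ω n| ≤ k * ε' := by
      rw [hωeq]
      simp only
      rw [← Finset.sum_sub_distrib]
      calc |∑ i, (f i ((n + d : ℕ) : ℝ) - f i n)| ≤ ∑ i, |f i ((n + d : ℕ) : ℝ) - f i n| :=
            Finset.abs_sum_le_sum_abs _ _
        _ ≤ ∑ _i : Fin k, ε' := Finset.sum_le_sum fun i _ => hterm i
        _ = k * ε' := by simp [mul_comm]
    refine lt_of_le_of_lt hsum ?_
    have h1 : (k:ℝ) * ε' < ((k:ℝ)+1) * ε' := mul_lt_mul_of_pos_right (lt_add_one _) hε'0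
    have h2 : ((k:ℝ)+1) * ε' = ε := by rw [hε']; field_simp
    linarith
  have : ∀ ε > (0:ℝ), dist (ω n) L ≤ ε := by
    intro ε hε
    obtain ⟨M, hM⟩ := (Metric.tendsto_atTop.mp hlim) (ε / 2) (by positivity)
    obtain ⟨m, hmM, hm⟩ := main (ε / 2) (by positivity) M
    have h1 : dist (ω m) L < ε / 2 := hM m hmM
    have h2 : dist (ω n) (ω m) < ε / 2 := by rw [Real.dist_eq, abs_sub_comm]; exact hm
    calc dist (ω n) L ≤ dist (ω n) (ω m) + dist (ω m) L := dist_triangle _ _ _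
      _ ≤ ε := by linarith
  exact eq_of_dist_eq_zero
    (le_antisymm (le_of_forall_gt_imp_ge_of_dense fun ε hε => this ε hε) dist_nonneg)
end

section
/- Let a < b be real numbers and let f be holomorphic on an open set containing {exp(it) : t ∈ [a,b]}. Suppose |f(exp(it))| ≤ 1 for all t ∈ [a,b], with equality for only finitely many t ∈ [a,b]. Then there exists δ > 0 such that for every integer k ≥ 0 there is a constant C_k with ∫_a^b |(H_k^m f)(exp(it))| dt ≤ C_k·m^{k−δ} for all positive integers m. -/
open MeasureTheory Set

/-- `Hop k g` is the result of applying the operator `g ↦ (z ↦ z·g′(z))` `k` times to `g`. -/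
noncomputable def Hop (k : ℕ) (g : ℂ → ℂ) : ℂ → ℂ :=
  (fun h : ℂ → ℂ => fun z => z * deriv h z)^[k] g

lemma Hop_succ (k : ℕ) (g : ℂ → ℂ) (z : ℂ) :
    Hop (k+1) g z = z * deriv (Hop k g) z := by
  unfold Hop
  rw [Function.iterate_succ_apply']

-- list sum helpers
lemma list_hasDerivAt {α : Type*} (L : List α) (F : α → ℂ → ℂ) (F' : α → ℂ) (z : ℂ)
    (h : ∀ p ∈ L, HasDerivAt (F p) (F' p) z) :
    HasDerivAt (fun w => (L.map (fun p => F p w)).sum) ((L.map F').sum) z := by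
  induction L with
  | nil => simpa using hasDerivAt_const z (0:ℂ)
  | cons p L ih =>
    simp only [List.map_cons, List.sum_cons]
    exact (h p (by simp)).add (ih (fun q hq => h q (by simp [hq])))

lemma list_continuousOn {α β : Type*} [TopologicalSpace β] [AddCommMonoid β]
    [ContinuousAdd β] (L : List α) (F : α → ℂ → β) (s : Set ℂ)
    (h : ∀ p ∈ L, ContinuousOn (F p) s) :
    ContinuousOn (fun w => (L.map (fun p => F p w)).sum) s := by
  induction L with
  | nil => simpa using continuousOn_const
  | cons p L ih =>
    simp only [List.map_cons, List.sum_cons]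
    exact (h p (by simp)).add (ih (fun q hq => h q (by simp [hq])))

lemma list_abs_sum_le {α : Type*} (L : List α) (F : α → ℂ) :
    ‖(L.map F).sum‖ ≤ (L.map (fun p => ‖F p‖)).sum := by
  induction L with
  | nil => simp
  | cons p L ih =>
    simp only [List.map_cons, List.sum_cons]
    exact (norm_add_le _ _).trans (by linarith)

lemma list_mul_sum_split {α : Type*} (L : List α) (z : ℂ) (A B C D : α → ℂ)
    (h : ∀ p ∈ L, z * (A p + B p) = C p + D p) :
    (L.map C).sum + (L.map D).sum = z * (L.map (fun p => A p + B p)).sum := by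
  induction L with
  | nil => simp
  | cons p L ih =>
    simp only [List.map_cons, List.sum_cons, mul_add]
    have h1 := h p (by simp)
    have h2 := ih (fun q hq => h q (by simp [hq]))
    rw [mul_add] at h1
    linear_combination -h1 + h2

lemma hop_rep (f : ℂ → ℂ) (V : Set ℂ) (hV : IsOpen V) (hf : DifferentiableOn ℂ f V)
    (k : ℕ) :
    ∃ L : List ((ℂ → ℂ) × (ℕ → ℂ) × ℕ),
      (∀ p ∈ L, DifferentiableOn ℂ p.1 V ∧ p.2.2 ≤ k ∧
        ∀ m : ℕ, 1 ≤ m → ‖p.2.1 m‖ ≤ (m:ℝ)^k) ∧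
      ∀ m : ℕ, ∀ z ∈ V, Hop k (fun w => f w ^ m) z
        = (L.map (fun p => p.2.1 m * p.1 z * f z ^ (m - p.2.2))).sum := by
  induction k with
  | zero =>
    refine ⟨[(fun _ => 1, fun _ => 1, 0)], ?_, ?_⟩
    · rintro p hp
      simp only [List.mem_singleton] at hp
      subst hp
      exact ⟨differentiableOn_const _, le_refl _, by intro m hm; simp⟩
    · intro m z hz
      simp [Hop]
  | succ k ih =>
    obtain ⟨L, hL, hrep⟩ := ih
    refine ⟨L.map (fun p => (fun z => z * deriv p.1 z, p.2.1, p.2.2)) ++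
            L.map (fun p => (fun z => z * (p.1 z * deriv f z),
              fun m => p.2.1 m * ((m - p.2.2 : ℕ) : ℂ), p.2.2 + 1)), ?_, ?_⟩
    · intro p hp
      simp only [List.mem_append, List.mem_map] at hp
      rcases hp with ⟨q, hq, rfl⟩ | ⟨q, hq, rfl⟩
      · obtain ⟨hd, he, hb⟩ := hL q hq
        refine ⟨?_, he.trans (Nat.le_succ _), ?_⟩
        · exact (differentiableOn_id).mul ((hd.analyticOnNhd hV).deriv.differentiableOn)
        · intro m hm
          calc ‖q.2.1 m‖ ≤ (m:ℝ)^k := hb m hm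
            _ ≤ (m:ℝ)^(k+1) := by
              apply pow_le_pow_right₀ (by exact_mod_cast hm)
              omega
      · obtain ⟨hd, he, hb⟩ := hL q hq
        refine ⟨?_, by simpa using Nat.succ_le_succ he, ?_⟩
        · exact (differentiableOn_id).mul (hd.mul ((hf.analyticOnNhd hV).deriv.differentiableOn))
        · intro m hm
          rw [norm_mul]
          calc ‖q.2.1 m‖ * ‖(((m - q.2.2 : ℕ)) : ℂ)‖
              ≤ (m:ℝ)^k * (m:ℝ) := by
                apply mul_le_mul (hb m hm) ?_ (norm_nonneg _) (by positivity)
                rw [RCLike.norm_natCast]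
                exact_mod_cast Nat.sub_le m q.2.2
            _ = (m:ℝ)^(k+1) := by ring
    · intro m z hz
      rw [Hop_succ]
      have hdz : ∀ p ∈ L, HasDerivAt (fun w => p.2.1 m * p.1 w * f w ^ (m - p.2.2))
          (p.2.1 m * deriv p.1 z * f z ^ (m - p.2.2)
            + p.2.1 m * p.1 z * (((m - p.2.2 : ℕ):ℂ) * f z ^ (m - p.2.2 - 1) * deriv f z)) z := by
        intro p hp
        have hc : HasDerivAt p.1 (deriv p.1 z) z :=
          ((hL p hp).1.differentiableAt (hV.mem_nhds hz)).hasDerivAt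
        have hfz : HasDerivAt f (deriv f z) z :=
          (hf.differentiableAt (hV.mem_nhds hz)).hasDerivAt
        have hpow : HasDerivAt (fun w => f w ^ (m - p.2.2))
            (((m - p.2.2 : ℕ):ℂ) * f z ^ (m - p.2.2 - 1) * deriv f z) z := hfz.pow _
        refine ((hc.const_mul (p.2.1 m)).mul hpow).congr_deriv ?_
        ring
      have hDeq : deriv (Hop k (fun w => f w ^ m)) z
          = (L.map (fun p => p.2.1 m * deriv p.1 z * f z ^ (m - p.2.2)
            + p.2.1 m * p.1 z * (((m - p.2.2 : ℕ):ℂ) * f z ^ (m - p.2.2 - 1) * deriv f z))).sum := by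
        have hev : Hop k (fun w => f w ^ m) =ᶠ[nhds z]
            (fun w => (L.map (fun p => p.2.1 m * p.1 w * f w ^ (m - p.2.2))).sum) := by
          filter_upwards [hV.mem_nhds hz] with w hw using hrep m w hw
        rw [hev.deriv_eq]
        exact (list_hasDerivAt L _ _ z hdz).deriv
      rw [hDeq]
      rw [List.map_append, List.sum_append]
      simp only [List.map_map, Function.comp_def]
      rw [← list_mul_sum_split L z _ _ _ _ ?_]
      intro p hp
      have h9 : m - p.2.2 - 1 = m - (p.2.2 + 1) := by omega
      rw [h9]
      ring

lemma hop_diffOn (V : Set ℂ) (hV : IsOpen V) (g : ℂ → ℂ) (hg : DifferentiableOn ℂ g V)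
    (k : ℕ) : DifferentiableOn ℂ (Hop k g) V := by
  induction k with
  | zero => simpa [Hop] using hg
  | succ k ih =>
    have : Hop (k+1) g = fun z => z * deriv (Hop k g) z := by
      funext z
      exact Hop_succ k g z
    rw [this]
    exact differentiableOn_id.mul ((ih.analyticOnNhd hV).deriv.differentiableOn)

lemma analytic_h (f : ℂ → ℂ) (V : Set ℂ) (hV : IsOpen V) (hf : DifferentiableOn ℂ f V)
    (t : ℝ) (ht : Complex.exp (Complex.I * t) ∈ V) :
    AnalyticAt ℝ (fun s : ℝ => 1 - Complex.normSq (f (Complex.exp (Complex.I * s)))) t := by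
  have h1 : AnalyticAt ℂ (fun w : ℂ => f (Complex.exp (Complex.I * w))) (t : ℂ) := by
    have hfa : AnalyticAt ℂ f (Complex.exp (Complex.I * (t:ℂ))) :=
      (hf.analyticOnNhd hV) _ ht
    have hexp : AnalyticAt ℂ (fun w : ℂ => Complex.exp (Complex.I * w)) (t : ℂ) :=
      (analyticAt_cexp.comp ((analyticAt_const).mul analyticAt_id))
    exact AnalyticAt.comp (g := f) hfa hexp
  have h2 : AnalyticAt ℝ (fun s : ℝ => f (Complex.exp (Complex.I * s))) t := by
    have := (h1.restrictScalars (𝕜 := ℝ)).comp (Complex.ofRealCLM.analyticAt t)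
    simpa [Function.comp_def] using this
  have hre : AnalyticAt ℝ (fun s : ℝ => (f (Complex.exp (Complex.I * s))).re) t :=
    (Complex.reCLM.analyticAt _).comp h2
  have him : AnalyticAt ℝ (fun s : ℝ => (f (Complex.exp (Complex.I * s))).im) t :=
    (Complex.imCLM.analyticAt _).comp h2
  have : AnalyticAt ℝ (fun s : ℝ =>
      (1 : ℝ) - ((f (Complex.exp (Complex.I * s))).re * (f (Complex.exp (Complex.I * s))).re
        + (f (Complex.exp (Complex.I * s))).im * (f (Complex.exp (Complex.I * s))).im)) t :=
    analyticAt_const.sub ((hre.mul hre).add (him.mul him))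
  simpa [Complex.normSq_apply] using this

/-- Local polynomial lower bound at a point of an analytic nonneg function with finitely
many zeros on `[a,b]`. -/
lemma local_lower (a b : ℝ) (hab : a < b) (h : ℝ → ℝ)
    (hzfin : {t ∈ Icc a b | h t = 0}.Finite)
    (hnn : ∀ t ∈ Icc a b, 0 ≤ h t)
    (t0 : ℝ) (ht0 : t0 ∈ Icc a b) (hA : AnalyticAt ℝ h t0) :
    ∃ n : ℕ, ∃ c > (0:ℝ), ∃ e > (0:ℝ), e ≤ 1 ∧
      ∀ t ∈ Icc a b, |t - t0| < e → c * |t - t0| ^ n ≤ h t := by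
  -- h is not eventually zero near t0
  have hnev : ¬ (∀ᶠ t in nhds t0, h t = 0) := by
    intro hev
    obtain ⟨e, he, hev⟩ := Metric.eventually_nhds_iff.mp hev
    set u := max a (t0 - e/2)
    set v := min b (t0 + e/2)
    obtain ⟨h1, h2⟩ := ht0
    have huv : u < v := max_lt (lt_min (by linarith) (by linarith))
      (lt_min (by linarith) (by linarith))
    have hsub : Icc u v ⊆ {t ∈ Icc a b | h t = 0} := by
      intro t htuv
      obtain ⟨h1, h2⟩ := htuv
      have hta : t ∈ Icc a b := ⟨le_trans (le_max_left _ _) h1, le_trans h2 (min_le_left _ _)⟩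
      refine ⟨hta, hev ?_⟩
      rw [Real.dist_eq]
      have := le_trans (le_max_right a (t0 - e/2)) h1
      have := le_trans h2 (min_le_right b (t0 + e/2))
      rw [abs_lt]
      constructor <;> linarith
    exact ((Set.Icc_infinite huv).mono hsub) hzfin
  have horder : analyticOrderAt h t0 ≠ ⊤ := fun hh => hnev (analyticOrderAt_eq_top.mp hh)
  obtain ⟨n, hn⟩ := WithTop.ne_top_iff_exists.mp horder
  obtain ⟨g, hg, hg0, hev⟩ := hA.analyticOrderAt_eq_natCast.mp hn.symm
  have hcont : ContinuousAt (fun t => |g t|) t0 := hg.continuousAt.abs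
  have hgt : ∀ᶠ t in nhds t0, |g t0| / 2 < |g t| :=
    hcont.eventually (eventually_gt_nhds (by simpa using abs_pos.mpr hg0))
  obtain ⟨e, he, hball⟩ := Metric.eventually_nhds_iff.mp (hev.and hgt)
  refine ⟨n, |g t0| / 2, by simpa using abs_pos.mpr hg0, min e 1, by positivity, min_le_right _ _,
    ?_⟩
  intro t ht hte
  have hd : dist t t0 < e := lt_of_lt_of_le (by simpa [Real.dist_eq] using hte) (min_le_left _ _)
  obtain ⟨heq, hgt2⟩ := hball hd
  have habs : |h t| = |t - t0| ^ n * |g t| := by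
    rw [heq, smul_eq_mul, abs_mul, abs_pow]
  have : |g t0| / 2 * |t - t0| ^ n ≤ |t - t0| ^ n * |g t| := by
    rw [mul_comm]
    apply mul_le_mul_of_nonneg_left (le_of_lt hgt2) (by positivity)
  calc |g t0| / 2 * |t - t0| ^ n ≤ |t - t0| ^ n * |g t| := this
    _ = |h t| := habs.symm
    _ = h t := abs_of_nonneg (hnn t ht)

lemma global_lower (a b : ℝ) (hab : a < b) (h : ℝ → ℝ) (S : Finset ℝ) (hS : S.Nonempty)
    (hzero : ∀ t ∈ Icc a b, (h t = 0 ↔ t ∈ S))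
    (hScc : ∀ s ∈ S, s ∈ Icc a b)
    (hnn : ∀ t ∈ Icc a b, 0 ≤ h t)
    (hcont : ContinuousOn h (Icc a b))
    (hA : ∀ t ∈ Icc a b, AnalyticAt ℝ h t) :
    ∃ N : ℕ, 1 ≤ N ∧ ∃ c : ℝ, 0 < c ∧ ∀ t ∈ Icc a b,
      c * (S.inf' hS (fun s => |t - s|)) ^ N ≤ h t ∧
      c * (S.inf' hS (fun s => |t - s|)) ^ N ≤ 1 := by
  have hzfin : {t ∈ Icc a b | h t = 0}.Finite := by
    apply S.finite_toSet.subset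
    rintro t ⟨ht, h0⟩
    exact (hzero t ht).1 h0
  have hloc : ∀ s : {x // x ∈ S}, ∃ n : ℕ, ∃ c > (0:ℝ), ∃ e > (0:ℝ), e ≤ 1 ∧
      ∀ t ∈ Icc a b, |t - s.1| < e → c * |t - s.1| ^ n ≤ h t :=
    fun s => local_lower a b hab h hzfin hnn s.1 (hScc _ s.2) (hA _ (hScc _ s.2))
  choose nn cc hcc ee hee hee1 hloc2 using hloc
  set N := 1 + S.attach.sup nn with hNdef
  have hN1 : 1 ≤ N := Nat.le_add_right 1 _
  have hnN : ∀ s : {x // x ∈ S}, nn s ≤ N :=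
    fun s => le_trans (Finset.le_sup (Finset.mem_attach _ s)) (Nat.le_add_left _ 1)
  -- the compact set away from the zeros
  set K := {t | t ∈ Icc a b ∧ ∀ s : {x // x ∈ S}, ee s ≤ |t - s.1|} with hKdef
  have hKsub : K ⊆ Icc a b := fun t ht => ht.1
  have hKclosed : IsClosed K := by
    have : K = Icc a b ∩ ⋂ s : {x // x ∈ S}, {t | ee s ≤ |t - s.1|} := by
      ext t
      simp [hKdef, Set.mem_iInter]
    rw [this]
    exact isClosed_Icc.inter (isClosed_iInter (fun s =>
      isClosed_le continuous_const ((continuous_id.sub continuous_const).abs)))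
  have hKcomp : IsCompact K := isCompact_Icc.of_isClosed_subset hKclosed hKsub
  have hc1 : ∃ c1 : ℝ, 0 < c1 ∧ c1 ≤ 1 ∧ ∀ t ∈ K, c1 ≤ h t := by
    rcases K.eq_empty_or_nonempty with hKe | hKne
    · exact ⟨1, one_pos, le_refl 1, by simp [hKe]⟩
    · obtain ⟨t1, ht1, hmin⟩ := hKcomp.exists_isMinOn hKne (hcont.mono hKsub)
      have ht1pos : 0 < h t1 := by
        rcases lt_or_eq_of_le (hnn t1 (hKsub ht1)) with hlt | heq
        · exact hlt
        · exfalso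
          have ht1S : t1 ∈ S := (hzero t1 (hKsub ht1)).1 heq.symm
          have := ht1.2 ⟨t1, ht1S⟩
          simp only [sub_self, abs_zero] at this
          exact absurd this (not_le.mpr (hee _))
      refine ⟨min 1 (h t1), lt_min one_pos ht1pos, min_le_left _ _, fun t ht => ?_⟩
      exact le_trans (min_le_right _ _) (hmin ht)
  obtain ⟨c1, hc1p, hc11, hc1K⟩ := hc1
  set R := max 1 (b - a) with hRdef
  have hR1 : (1:ℝ) ≤ R := le_max_left _ _
  have hR0 : (0:ℝ) < R := lt_of_lt_of_le one_pos hR1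
  have hattne : S.attach.Nonempty := Finset.attach_nonempty_iff.mpr hS
  set c2 := S.attach.inf' hattne cc with hc2def
  have hc2p : 0 < c2 := (Finset.lt_inf'_iff hattne).mpr (fun s _ => hcc s)
  have hc2le : ∀ s : {x // x ∈ S}, c2 ≤ cc s :=
    fun s => Finset.inf'_le _ (Finset.mem_attach _ s)
  refine ⟨N, hN1, min 1 (min c2 (c1 / R ^ N)), by positivity, ?_⟩
  intro t ht
  set ρ := S.inf' hS (fun s => |t - s|) with hρdef
  have hρ0 : 0 ≤ ρ := Finset.le_inf' _ _ (fun s _ => abs_nonneg _)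
  have hρR : ρ ≤ R := by
    obtain ⟨s0, hs0⟩ := hS
    refine le_trans (Finset.inf'_le _ hs0) ?_
    have h1 := (hScc s0 hs0).1
    have h2 := (hScc s0 hs0).2
    rw [abs_le]
    constructor
    · have : -(b-a) ≤ t - s0 := by obtain ⟨hta, htb⟩ := ht; linarith
      exact le_trans (neg_le_neg (le_max_right 1 (b-a))) this
    · obtain ⟨hta, htb⟩ := ht
      exact le_trans (by linarith) (le_max_right 1 (b-a))
  set c := min 1 (min c2 (c1 / R ^ N)) with hcdef
  have hcle1 : c ≤ 1 := min_le_left _ _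
  have hclec2 : c ≤ c2 := le_trans (min_le_right _ _) (min_le_left _ _)
  have hclec1R : c ≤ c1 / R ^ N := le_trans (min_le_right _ _) (min_le_right _ _)
  have hc0 : 0 < c := by positivity
  by_cases hK : ∀ s : {x // x ∈ S}, ee s ≤ |t - s.1|
  · -- t is in K
    have htK : t ∈ K := ⟨ht, hK⟩
    have hbound : c * ρ ^ N ≤ c1 := by
      calc c * ρ ^ N ≤ (c1 / R ^ N) * R ^ N :=
            mul_le_mul hclec1R (pow_le_pow_left₀ hρ0 hρR N) (by positivity) (by positivity)
        _ = c1 := by field_simp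
    exact ⟨le_trans hbound (hc1K t htK), le_trans hbound hc11⟩
  · push_neg at hK
    obtain ⟨s, hs⟩ := hK
    have hρle : ρ ≤ |t - s.1| := Finset.inf'_le _ s.2
    have hts1 : |t - s.1| ≤ 1 := le_trans hs.le (hee1 s)
    have hkey : c * ρ ^ N ≤ cc s * |t - s.1| ^ (nn s) := by
      apply mul_le_mul (le_trans hclec2 (hc2le s))
      · calc ρ ^ N ≤ |t - s.1| ^ N := pow_le_pow_left₀ hρ0 hρle N
          _ ≤ |t - s.1| ^ (nn s) := pow_le_pow_of_le_one (abs_nonneg _) hts1 (hnN s)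
      · positivity
      · exact (hcc s).le
    refine ⟨le_trans hkey (hloc2 s t ht hs), ?_⟩
    calc c * ρ ^ N ≤ 1 * |t - s.1| ^ N :=
          mul_le_mul hcle1 (pow_le_pow_left₀ hρ0 hρle N) (by positivity) one_pos.le
      _ = |t - s.1| ^ N := one_mul _
      _ ≤ 1 := pow_le_one₀ (abs_nonneg _) hts1

lemma exp_neg_le_inv {x : ℝ} (hx : 0 < x) : Real.exp (-x) ≤ x⁻¹ := by
  rw [Real.exp_neg]
  apply inv_anti₀ hx
  linarith [Real.add_one_le_exp x]

lemma sq_le_imp_le {x B : ℝ} (hx : 0 ≤ x) (hB : 0 ≤ B) (h : x ^ 2 ≤ B ^ 2) : x ≤ B := by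
  nlinarith

lemma key_integral (a b : ℝ) (hab : a < b) (φ : ℝ → ℝ)
    (hφc : ContinuousOn φ (Icc a b))
    (hφ0 : ∀ t ∈ Icc a b, 0 ≤ φ t)
    (hφ1 : ∀ t ∈ Icc a b, φ t ≤ 1)
    (hA : ∀ t ∈ Icc a b, AnalyticAt ℝ (fun s => 1 - φ s ^ 2) t)
    (hfin : {t ∈ Icc a b | φ t = 1}.Finite) :
    ∃ δ : ℝ, 0 < δ ∧ δ ≤ 1 ∧ ∃ C0 : ℝ, 0 ≤ C0 ∧ ∀ n : ℕ, 1 ≤ n →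
      ∫ t in a..b, φ t ^ n ≤ C0 * (n:ℝ) ^ (-δ) := by
  classical
  set h : ℝ → ℝ := fun s => 1 - φ s ^ 2 with hdef
  have hnn : ∀ t ∈ Icc a b, 0 ≤ h t := by
    intro t ht
    have h1 := hφ1 t ht
    have h0 := hφ0 t ht
    simp only [hdef, sub_nonneg]
    nlinarith
  have hhcont : ContinuousOn h (Icc a b) := continuousOn_const.sub (hφc.pow 2)
  set S : Finset ℝ := hfin.toFinset with hSdef
  have hzero : ∀ t ∈ Icc a b, (h t = 0 ↔ t ∈ S) := by
    intro t ht
    have h0 := hφ0 t ht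
    simp only [hSdef, Set.Finite.mem_toFinset, Set.mem_setOf_eq]
    constructor
    · intro hh
      refine ⟨ht, ?_⟩
      have : φ t ^ 2 = 1 := by simp only [hdef] at hh; linarith
      nlinarith
    · rintro ⟨-, h1⟩
      simp [hdef, h1]
  have hScc : ∀ s ∈ S, s ∈ Icc a b := by
    intro s hs
    simp only [hSdef, Set.Finite.mem_toFinset, Set.mem_setOf_eq] at hs
    exact hs.1
  -- mean bound: get N, c with the polynomial lower bound, treating S = ∅ separately
  have main : ∃ N : ℕ, 1 ≤ N ∧ ∃ c : ℝ, 0 < c ∧ c ≤ 1 ∧ ∃ ρ : ℝ → ℝ,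
      (∀ t, 0 ≤ ρ t) ∧
      (∀ t ∈ Icc a b, φ t ≤ 1 - (c/2) * ρ t ^ N) ∧
      (∀ (r : ℝ), 0 < r → r ≤ 1 → ∀ t ∈ Icc a b, r < ρ t ∨
        ∃ s ∈ S, t ∈ Icc (s - r) (s + r)) := by
    rcases S.eq_empty_or_nonempty with hSe | hSne
    · -- no zeros: h has a positive minimum
      obtain ⟨t1, ht1, hmin⟩ := isCompact_Icc.exists_isMinOn (Set.nonempty_Icc.mpr hab.le)
        hhcont
      have ht1pos : 0 < h t1 := by
        rcases lt_or_eq_of_le (hnn t1 ht1) with hlt | heq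
        · exact hlt
        · exact absurd ((hzero t1 ht1).1 heq.symm) (by simp [hSe])
      set c := min 1 (h t1) with hcdef
      have hc0 : 0 < c := lt_min one_pos ht1pos
      have hc1 : c ≤ 1 := min_le_left _ _
      refine ⟨1, le_refl 1, c/2, by positivity, by linarith, fun _ => 2,
        fun _ => by norm_num, ?_, ?_⟩
      · intro t ht
        have hc_le : c ≤ h t := le_trans (min_le_right _ _) (hmin ht)
        have hsq : φ t ^ 2 ≤ 1 - c := by simp only [hdef] at hc_le; linarith
        have hgoal : φ t ≤ 1 - c/2 := by
          apply sq_le_imp_le (hφ0 t ht) (by linarith)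
          nlinarith
        calc φ t ≤ 1 - c/2 := hgoal
          _ ≤ 1 - c/2/2 * 2 ^ 1 := by ring_nf; linarith
      · intro r hr hr1 t ht
        left
        show r < 2
        linarith
    · obtain ⟨N, hN1, c, hc0, hglob⟩ :=
        global_lower a b hab h S hSne hzero hScc hnn hhcont hA
      set ρ : ℝ → ℝ := fun t => S.inf' hSne (fun s => |t - s|) with hρdef
      have hρ0 : ∀ t, 0 ≤ ρ t := fun t => Finset.le_inf' _ _ (fun s _ => abs_nonneg _)
      refine ⟨N, hN1, min c 1, lt_min hc0 one_pos, min_le_right _ _, ρ, hρ0, ?_, ?_⟩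
      · intro t ht
        obtain ⟨hlow, hle1⟩ := hglob t ht
        have hcm : min c 1 ≤ c := min_le_left _ _
        have hm0 : 0 < min c 1 := lt_min hc0 one_pos
        have hρN : 0 ≤ ρ t ^ N := pow_nonneg (hρ0 t) N
        have hlow' : min c 1 * ρ t ^ N ≤ h t :=
          le_trans (mul_le_mul_of_nonneg_right hcm hρN) hlow
        have hle1' : min c 1 * ρ t ^ N ≤ 1 :=
          le_trans (mul_le_mul_of_nonneg_right hcm hρN) hle1
        apply sq_le_imp_le (hφ0 t ht) (by nlinarith)
        have : φ t ^ 2 ≤ 1 - min c 1 * ρ t ^ N := by simp only [hdef] at hlow'; linarith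
        nlinarith [mul_nonneg hm0.le hρN]
      · intro r hr hr1 t ht
        rcases lt_or_ge r (ρ t) with hcase | hcase
        · exact Or.inl hcase
        · obtain ⟨s, hs, hseq⟩ := Finset.exists_mem_eq_inf' hSne (fun s => |t - s|)
          refine Or.inr ⟨s, hs, ?_⟩
          have : |t - s| ≤ r := by rw [hρdef] at hcase; rw [← hseq] at *; linarith
          rw [abs_le] at this
          constructor <;> [linarith [this.1]; linarith [this.2]]
  obtain ⟨N, hN1, c, hc0, hc1, ρ, hρ0, hφle, hdich⟩ := main
  have hNr : (0:ℝ) < (N:ℝ) + 1 := by positivity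
  set δ : ℝ := 1/((N:ℝ)+1) with hδdef
  have hδ0 : 0 < δ := by positivity
  have hδ1 : δ ≤ 1 := by
    rw [hδdef, div_le_one hNr]
    have : (1:ℝ) ≤ (N:ℝ) := by exact_mod_cast hN1
    linarith
  have hba : (0:ℝ) ≤ b - a := by linarith
  refine ⟨δ, hδ0, hδ1, (S.card : ℝ) * 2 + (b-a) * (2/c),
    add_nonneg (by positivity) (mul_nonneg hba (by positivity)), ?_⟩
  intro n hn
  set nr : ℝ := (n:ℝ) with hnrdef
  have hnr1 : (1:ℝ) ≤ nr := by rw [hnrdef]; exact_mod_cast hn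
  have hnr0 : (0:ℝ) < nr := by linarith
  set sstar : ℝ := nr ^ (-δ) with hssdef
  have hss0 : 0 < sstar := Real.rpow_pos_of_pos hnr0 _
  have hss1 : sstar ≤ 1 := Real.rpow_le_one_of_one_le_of_nonpos hnr1 (by linarith)
  set E : ℝ := Real.exp (-(c/2 * nr ^ δ)) with hEdef
  have hE0 : 0 < E := Real.exp_pos _
  -- key exponent computation
  have hssN : nr * sstar ^ N = nr ^ δ := by
    have e1 : sstar ^ N = nr ^ (-δ * N) := by
      rw [hssdef, ← Real.rpow_natCast (nr ^ (-δ)) N, ← Real.rpow_mul hnr0.le]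
    have e3 : 1 + (-δ * (N:ℝ)) = δ := by
      rw [hδdef]
      field_simp
      ring
    calc nr * sstar ^ N = nr ^ (1:ℝ) * nr ^ (-δ * (N:ℝ)) := by rw [e1, Real.rpow_one]
      _ = nr ^ (1 + -δ * (N:ℝ)) := (Real.rpow_add hnr0 _ _).symm
      _ = nr ^ δ := by rw [e3]
  -- pointwise bound
  have hpt : ∀ t ∈ Ioc a b, φ t ^ n ≤
      (∑ s ∈ S, (Icc (s - sstar) (s + sstar)).indicator (fun _ => (1:ℝ)) t) + E := by
    intro t ht
    have htIcc : t ∈ Icc a b := Ioc_subset_Icc_self ht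
    have hsum0 : 0 ≤ ∑ s ∈ S, (Icc (s - sstar) (s + sstar)).indicator (fun _ => (1:ℝ)) t :=
      Finset.sum_nonneg (fun s _ => Set.indicator_nonneg (fun _ _ => zero_le_one) t)
    rcases hdich sstar hss0 hss1 t htIcc with hcase | ⟨s, hsS, hts⟩
    · -- exponential bound
      have hφt := hφle t htIcc
      have hρpos : 0 ≤ c/2 * ρ t ^ N := mul_nonneg (by positivity) (pow_nonneg (hρ0 t) N)
      have h1 : φ t ^ n ≤ (1 - c/2 * ρ t ^ N) ^ n :=
        pow_le_pow_left₀ (hφ0 t htIcc) hφt n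
      have h2 : (1 - c/2 * ρ t ^ N) ^ n ≤ Real.exp (-(c/2 * ρ t ^ N)) ^ n := by
        apply pow_le_pow_left₀ (by linarith [hφ0 t htIcc, hφt]) ?_ n
        linarith [Real.add_one_le_exp (-(c/2 * ρ t ^ N))]
      have h3 : Real.exp (-(c/2 * ρ t ^ N)) ^ n = Real.exp (-(c/2 * (nr * ρ t ^ N))) := by
        rw [← Real.exp_nat_mul]
        congr 1
        ring
      have h4 : Real.exp (-(c/2 * (nr * ρ t ^ N))) ≤ E := by
        rw [hEdef, ← hssN]
        apply Real.exp_le_exp.mpr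
        have hsp : sstar ^ N ≤ ρ t ^ N := pow_le_pow_left₀ hss0.le hcase.le N
        have : sstar ^ N * nr ≤ ρ t ^ N * nr :=
          mul_le_mul_of_nonneg_right hsp hnr0.le
        nlinarith
      calc φ t ^ n ≤ (1 - c/2 * ρ t ^ N) ^ n := h1
        _ ≤ Real.exp (-(c/2 * ρ t ^ N)) ^ n := h2
        _ = Real.exp (-(c/2 * (nr * ρ t ^ N))) := h3
        _ ≤ E := h4
        _ ≤ _ := le_add_of_nonneg_left hsum0
    · -- t is close to a zero
      have hind : (Icc (s - sstar) (s + sstar)).indicator (fun _ => (1:ℝ)) t = 1 :=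
        Set.indicator_of_mem hts _
      have hsingle : (1:ℝ) ≤ ∑ s ∈ S, (Icc (s - sstar) (s + sstar)).indicator
          (fun _ => (1:ℝ)) t := by
        exact le_trans (le_of_eq hind.symm) (Finset.single_le_sum
          (f := fun s => (Icc (s - sstar) (s + sstar)).indicator (fun _ => (1:ℝ)) t)
          (fun s _ => Set.indicator_nonneg (fun _ _ => zero_le_one) t) hsS)
      have : φ t ^ n ≤ 1 := pow_le_one₀ (hφ0 t htIcc) (hφ1 t htIcc)
      linarith
  -- integrability
  have hInt1 : IntegrableOn (fun t => φ t ^ n) (Ioc a b) volume :=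
    ((hφc.pow n).integrableOn_compact isCompact_Icc).mono_set Ioc_subset_Icc_self
  have hIndInt : ∀ s : ℝ, Integrable
      ((Icc (s - sstar) (s + sstar)).indicator (fun _ => (1:ℝ)))
      (volume.restrict (Ioc a b)) := by
    intro s
    rw [integrable_indicator_iff measurableSet_Icc]
    refine integrableOn_const (ne_of_lt ?_)
    exact lt_of_le_of_lt (Measure.restrict_apply_le _ _) measure_Icc_lt_top
  have hIg : Integrable (fun t =>
      (∑ s ∈ S, (Icc (s - sstar) (s + sstar)).indicator (fun _ => (1:ℝ)) t) + E)
      (volume.restrict (Ioc a b)) := by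
    apply Integrable.add
    · exact integrable_finset_sum _ (fun s _ => hIndInt s)
    · exact integrableOn_const measure_Ioc_lt_top.ne
  -- the integral estimate
  have hmono := MeasureTheory.setIntegral_mono_on hInt1 hIg measurableSet_Ioc hpt
  have hindval : ∀ s : ℝ, (∫ t in Ioc a b,
      (Icc (s - sstar) (s + sstar)).indicator (fun _ => (1:ℝ)) t) ≤ 2 * sstar := by
    intro s
    rw [MeasureTheory.setIntegral_indicator measurableSet_Icc]
    rw [MeasureTheory.setIntegral_const]
    rw [smul_eq_mul, mul_one]
    apply ENNReal.toReal_le_of_le_ofReal (by positivity)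
    refine le_trans (measure_mono inter_subset_right) ?_
    rw [Real.volume_Icc]
    apply ENNReal.ofReal_le_ofReal
    ring_nf
    linarith
  have hsplit : (∫ t in Ioc a b,
      ((∑ s ∈ S, (Icc (s - sstar) (s + sstar)).indicator (fun _ => (1:ℝ)) t) + E))
      = (∑ s ∈ S, ∫ t in Ioc a b,
          (Icc (s - sstar) (s + sstar)).indicator (fun _ => (1:ℝ)) t)
        + (volume (Ioc a b)).toReal * E := by
    rw [MeasureTheory.integral_add (integrable_finset_sum _ (fun s _ => hIndInt s))
      (integrableOn_const measure_Ioc_lt_top.ne)]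
    rw [MeasureTheory.integral_finset_sum _ (fun s _ => hIndInt s)]
    rw [MeasureTheory.setIntegral_const, smul_eq_mul]
    rfl
  have hEbound : E ≤ 2/c * nr ^ (-δ) := by
    have hx : 0 < c/2 * nr ^ δ := by positivity
    calc E ≤ (c/2 * nr ^ δ)⁻¹ := exp_neg_le_inv hx
      _ = 2/c * (nr ^ δ)⁻¹ := by rw [mul_inv, inv_div]
      _ = 2/c * nr ^ (-δ) := by rw [← Real.rpow_neg hnr0.le]
  have hvol : (volume (Ioc a b)).toReal = b - a := by
    rw [Real.volume_Ioc, ENNReal.toReal_ofReal hba]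
  have hsum_le : (∑ s ∈ S, ∫ t in Ioc a b,
      (Icc (s - sstar) (s + sstar)).indicator (fun _ => (1:ℝ)) t)
      ≤ (S.card : ℝ) * (2 * sstar) := by
    calc (∑ s ∈ S, ∫ t in Ioc a b,
        (Icc (s - sstar) (s + sstar)).indicator (fun _ => (1:ℝ)) t)
        ≤ ∑ _s ∈ S, 2 * sstar := Finset.sum_le_sum (fun s _ => hindval s)
      _ = (S.card : ℝ) * (2 * sstar) := by rw [Finset.sum_const, nsmul_eq_mul]
  rw [intervalIntegral.integral_of_le hab.le]
  calc (∫ t in Ioc a b, φ t ^ n)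
      ≤ ∫ t in Ioc a b,
        ((∑ s ∈ S, (Icc (s - sstar) (s + sstar)).indicator (fun _ => (1:ℝ)) t) + E) := hmono
    _ = (∑ s ∈ S, ∫ t in Ioc a b,
          (Icc (s - sstar) (s + sstar)).indicator (fun _ => (1:ℝ)) t)
        + (volume (Ioc a b)).toReal * E := hsplit
    _ ≤ (S.card : ℝ) * (2 * sstar) + (b - a) * (2/c * nr ^ (-δ)) := by
        rw [hvol]
        exact add_le_add hsum_le (mul_le_mul_of_nonneg_left hEbound hba)
    _ = ((S.card : ℝ) * 2 + (b-a) * (2/c)) * nr ^ (-δ) := by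
        rw [hssdef]
        ring

lemma list_sum_abs_nonneg {α : Type*} (L : List α) (F : α → ℂ) :
    0 ≤ (L.map (fun p => ‖F p‖)).sum :=
  List.sum_nonneg (by
    intro x hx
    obtain ⟨p, _, rfl⟩ := List.mem_map.mp hx
    exact norm_nonneg _)

theorem stmt11 (a b : ℝ) (hab : a < b) (f : ℂ → ℂ) (V : Set ℂ) (hV : IsOpen V)
    (hVc : ∀ t ∈ Set.Icc a b, Complex.exp (Complex.I * t) ∈ V)
    (hf : DifferentiableOn ℂ f V)
    (hle : ∀ t ∈ Set.Icc a b, ‖f (Complex.exp (Complex.I * t))‖ ≤ 1)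
    (hfin : {t ∈ Set.Icc a b | ‖f (Complex.exp (Complex.I * t))‖ = 1}.Finite) :
    ∃ δ > (0 : ℝ), ∀ k : ℕ, ∃ C : ℝ, ∀ m : ℕ, 1 ≤ m →
      (∫ t in a..b,
          ‖Hop k (fun z => f z ^ m) (Complex.exp (Complex.I * t))‖)
        ≤ C * (m : ℝ) ^ ((k : ℝ) - δ) := by
  classical
  set cexpt : ℝ → ℂ := fun t => Complex.exp (Complex.I * t) with hcexptdef
  have hcexp : Continuous cexpt :=
    Complex.continuous_exp.comp (continuous_const.mul Complex.continuous_ofReal)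
  set φ : ℝ → ℝ := fun t => ‖f (cexpt t)‖ with hφdef
  have hφc : ContinuousOn φ (Icc a b) :=
    continuous_norm.comp_continuousOn
      (hf.continuousOn.comp hcexp.continuousOn (fun t ht => hVc t ht))
  have hφ0 : ∀ t ∈ Icc a b, 0 ≤ φ t := fun t _ => norm_nonneg _
  have hA : ∀ t ∈ Icc a b, AnalyticAt ℝ (fun s => 1 - φ s ^ 2) t := by
    intro t ht
    have heq : (fun s : ℝ => 1 - φ s ^ 2)
        = (fun s : ℝ => 1 - Complex.normSq (f (Complex.exp (Complex.I * s)))) := by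
      funext s
      simp only [hφdef, hcexptdef, Complex.sq_norm]
    rw [heq]
    exact analytic_h f V hV hf t (hVc t ht)
  obtain ⟨δ, hδ0, hδ1, C0, hC00, hkey⟩ := key_integral a b hab φ hφc hφ0 hle hA hfin
  refine ⟨δ, hδ0, ?_⟩
  intro k
  obtain ⟨L, hL, hrep⟩ := hop_rep f V hV hf k
  set G : ℂ → ℝ := fun z => (L.map (fun p => ‖p.1 z‖)).sum with hGdef
  have hGc : ContinuousOn G V :=
    list_continuousOn L _ V
      (fun p hp => continuous_norm.comp_continuousOn ((hL p hp).1.continuousOn))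
  have harc : cexpt '' (Icc a b) ⊆ V := by
    rintro z ⟨t, ht, rfl⟩
    exact hVc t ht
  have harcC : IsCompact (cexpt '' Icc a b) := isCompact_Icc.image hcexp
  have harcN : (cexpt '' Icc a b).Nonempty := ⟨cexpt a, ⟨a, ⟨le_refl a, hab.le⟩, rfl⟩⟩
  obtain ⟨z0, hz0, hz0max⟩ := harcC.exists_isMaxOn harcN (hGc.mono harc)
  set D := G z0 with hDdef
  have hDbound : ∀ t ∈ Icc a b, G (cexpt t) ≤ D :=
    fun t ht => hz0max (mem_image_of_mem _ ht)
  have hD0 : 0 ≤ D :=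
    le_trans (list_sum_abs_nonneg L _) (hDbound a ⟨le_refl a, hab.le⟩)
  -- pointwise bound on the arc
  have hpt : ∀ m : ℕ, 1 ≤ m → ∀ t ∈ Icc a b,
      ‖Hop k (fun z => f z ^ m) (cexpt t)‖ ≤ D * (m:ℝ)^k * φ t ^ (m - k) := by
    intro m hm t ht
    have hz : cexpt t ∈ V := hVc t ht
    rw [hrep m (cexpt t) hz]
    refine le_trans (list_abs_sum_le L _) ?_
    have hterm : ∀ p ∈ L,
        ‖p.2.1 m * p.1 (cexpt t) * f (cexpt t) ^ (m - p.2.2)‖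
        ≤ ((m:ℝ)^k * φ t ^ (m - k)) * ‖p.1 (cexpt t)‖ := by
      intro p hp
      obtain ⟨hpd, hpe, hpq⟩ := hL p hp
      rw [norm_mul, norm_mul, norm_pow]
      have h1 : ‖f (cexpt t)‖ ^ (m - p.2.2) ≤ φ t ^ (m - k) :=
        pow_le_pow_of_le_one (norm_nonneg _) (hle t ht) (Nat.sub_le_sub_left hpe m)
      have h2 : ‖p.2.1 m‖ * ‖p.1 (cexpt t)‖
          ≤ (m:ℝ)^k * ‖p.1 (cexpt t)‖ :=
        mul_le_mul_of_nonneg_right (hpq m hm) (norm_nonneg _)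
      calc ‖p.2.1 m‖ * ‖p.1 (cexpt t)‖
            * ‖f (cexpt t)‖ ^ (m - p.2.2)
          ≤ ((m:ℝ)^k * ‖p.1 (cexpt t)‖) * (φ t ^ (m - k)) := by
            apply mul_le_mul h2 h1 (pow_nonneg (norm_nonneg _) _)
            positivity
        _ = ((m:ℝ)^k * φ t ^ (m - k)) * ‖p.1 (cexpt t)‖ := by ring
    refine le_trans (List.sum_le_sum hterm) ?_
    rw [List.sum_map_mul_left]
    have hGt : G (cexpt t) ≤ D := hDbound t ht
    have h3 : 0 ≤ (m:ℝ)^k * φ t ^ (m - k) :=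
      mul_nonneg (by positivity) (pow_nonneg (hφ0 t ht) _)
    calc ((m:ℝ)^k * φ t ^ (m - k)) * (L.map (fun p => ‖p.1 (cexpt t)‖)).sum
        ≤ ((m:ℝ)^k * φ t ^ (m - k)) * D := mul_le_mul_of_nonneg_left hGt h3
      _ = D * (m:ℝ)^k * φ t ^ (m - k) := by ring
  -- continuity/integrability of the integrands
  have hHc : ∀ m : ℕ, ContinuousOn
      (fun t => ‖Hop k (fun z => f z ^ m) (cexpt t)‖) (Icc a b) := by
    intro m
    have hdm : DifferentiableOn ℂ (fun z => f z ^ m) V := hf.pow m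
    have hdh := hop_diffOn V hV _ hdm k
    exact continuous_norm.comp_continuousOn
      (hdh.continuousOn.comp hcexp.continuousOn (fun t ht => hVc t ht))
  have hba : (0:ℝ) ≤ b - a := by linarith
  set C1 := D * ((2*k+2 : ℕ):ℝ)^k * (b - a) with hC1def
  have hC10 : 0 ≤ C1 := mul_nonneg (mul_nonneg hD0 (by positivity)) hba
  refine ⟨max (2 * D * C0) C1, ?_⟩
  intro m hm
  have hmpos : (0:ℝ) < (m:ℝ) := by exact_mod_cast hm
  have hint1 : IntervalIntegrable
      (fun t => ‖Hop k (fun z => f z ^ m) (cexpt t)‖) volume a b := by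
    apply ContinuousOn.intervalIntegrable
    rw [Set.uIcc_of_le hab.le]
    exact hHc m
  have hintφ : ∀ j : ℕ, IntervalIntegrable (fun t => φ t ^ j) volume a b := by
    intro j
    apply ContinuousOn.intervalIntegrable
    rw [Set.uIcc_of_le hab.le]
    exact hφc.pow j
  have hstep1 : (∫ t in a..b, ‖Hop k (fun z => f z ^ m) (cexpt t)‖)
      ≤ D * (m:ℝ)^k * ∫ t in a..b, φ t ^ (m - k) := by
    have hmono := intervalIntegral.integral_mono_on hab.le hint1
      ((hintφ (m-k)).const_mul (D * (m:ℝ)^k)) (hpt m hm)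
    rwa [intervalIntegral.integral_const_mul] at hmono
  have hDmk : 0 ≤ D * (m:ℝ)^k := mul_nonneg hD0 (by positivity)
  have hrpow0 : (0:ℝ) ≤ (m:ℝ) ^ ((k:ℝ) - δ) := Real.rpow_nonneg hmpos.le _
  rcases le_or_gt (2*k+2) m with hcase | hcase
  · -- large m
    have hmk1 : 1 ≤ m - k := by omega
    have h2 := hkey (m - k) hmk1
    have hcast : ((m - k : ℕ):ℝ) = (m:ℝ) - (k:ℝ) := by
      have hkm : k ≤ m := by omega
      exact Nat.cast_sub hkm
    rw [hcast] at h2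
    have hhalf : (m:ℝ)/2 ≤ (m:ℝ) - (k:ℝ) := by
      have : (2*(k:ℝ)+2) ≤ (m:ℝ) := by exact_mod_cast hcase
      linarith
    have hrp : ((m:ℝ) - (k:ℝ)) ^ (-δ) ≤ ((m:ℝ)/2) ^ (-δ) :=
      Real.rpow_le_rpow_of_nonpos (by positivity) hhalf (by linarith)
    have hms : ((m:ℝ)/2) ^ (-δ) = (m:ℝ)^(-δ) * 2^δ := by
      rw [div_eq_mul_inv, Real.mul_rpow hmpos.le (by norm_num),
        Real.inv_rpow (by norm_num), Real.rpow_neg (by norm_num : (0:ℝ) ≤ 2), inv_inv]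
    have h2δ : (2:ℝ) ^ δ ≤ 2 := by
      calc (2:ℝ)^δ ≤ (2:ℝ)^(1:ℝ) := Real.rpow_le_rpow_of_exponent_le (by norm_num) hδ1
        _ = 2 := Real.rpow_one 2
    have hfinal : ((m:ℝ) - (k:ℝ)) ^ (-δ) ≤ 2 * (m:ℝ)^(-δ) := by
      rw [hms] at hrp
      calc ((m:ℝ) - (k:ℝ)) ^ (-δ) ≤ (m:ℝ)^(-δ) * 2^δ := hrp
        _ ≤ (m:ℝ)^(-δ) * 2 :=
            mul_le_mul_of_nonneg_left h2δ (Real.rpow_nonneg hmpos.le _)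
        _ = 2 * (m:ℝ)^(-δ) := by ring
    have hkd : (m:ℝ)^(k:ℕ) * (m:ℝ)^(-δ) = (m:ℝ)^((k:ℝ) - δ) := by
      rw [← Real.rpow_natCast (m:ℝ) k, ← Real.rpow_add hmpos, sub_eq_add_neg]
    calc (∫ t in a..b, ‖Hop k (fun z => f z ^ m) (cexpt t)‖)
        ≤ D * (m:ℝ)^k * ∫ t in a..b, φ t ^ (m - k) := hstep1
      _ ≤ D * (m:ℝ)^k * (C0 * ((m:ℝ) - (k:ℝ)) ^ (-δ)) :=
          mul_le_mul_of_nonneg_left h2 hDmk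
      _ ≤ D * (m:ℝ)^k * (C0 * (2 * (m:ℝ)^(-δ))) := by
          apply mul_le_mul_of_nonneg_left (mul_le_mul_of_nonneg_left hfinal hC00) hDmk
      _ = (2 * D * C0) * ((m:ℝ)^(k:ℕ) * (m:ℝ)^(-δ)) := by ring
      _ = (2 * D * C0) * (m:ℝ)^((k:ℝ) - δ) := by rw [hkd]
      _ ≤ max (2 * D * C0) C1 * (m:ℝ)^((k:ℝ) - δ) :=
          mul_le_mul_of_nonneg_right (le_max_left _ _) hrpow0
  · -- small m
    have hφle1 : ∀ t ∈ Icc a b, φ t ^ (m - k) ≤ 1 :=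
      fun t ht => pow_le_one₀ (hφ0 t ht) (hle t ht)
    have hintone : (∫ t in a..b, φ t ^ (m - k)) ≤ b - a := by
      have := intervalIntegral.integral_mono_on hab.le (hintφ (m-k))
        intervalIntegrable_const hφle1
      rwa [intervalIntegral.integral_const, smul_eq_mul, mul_one] at this
    have hmk : (m:ℝ)^k ≤ ((2*k+2:ℕ):ℝ)^k := by
      apply pow_le_pow_left₀ hmpos.le
      exact_mod_cast hcase.le
    have hbound : (∫ t in a..b, ‖Hop k (fun z => f z ^ m) (cexpt t)‖) ≤ C1 := by
      calc (∫ t in a..b, ‖Hop k (fun z => f z ^ m) (cexpt t)‖)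
          ≤ D * (m:ℝ)^k * ∫ t in a..b, φ t ^ (m - k) := hstep1
        _ ≤ D * (m:ℝ)^k * (b - a) := mul_le_mul_of_nonneg_left hintone hDmk
        _ ≤ D * ((2*k+2:ℕ):ℝ)^k * (b - a) := by
            apply mul_le_mul_of_nonneg_right (mul_le_mul_of_nonneg_left hmk hD0) hba
        _ = C1 := rfl
    have hone : (1:ℝ) ≤ (m:ℝ)^((k:ℝ) - δ) := by
      rcases Nat.eq_zero_or_pos k with hk0 | hk1
      · have hm1 : m = 1 := by omega
        rw [hm1]
        simp
      · have hkd0 : 0 ≤ (k:ℝ) - δ := by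
          have : (1:ℝ) ≤ (k:ℝ) := by exact_mod_cast hk1
          linarith
        calc (1:ℝ) = (1:ℝ) ^ ((k:ℝ) - δ) := (Real.one_rpow _).symm
          _ ≤ (m:ℝ)^((k:ℝ) - δ) :=
              Real.rpow_le_rpow zero_le_one (by exact_mod_cast hm) hkd0
    calc (∫ t in a..b, ‖Hop k (fun z => f z ^ m) (cexpt t)‖)
        ≤ C1 := hbound
      _ = C1 * 1 := (mul_one _).symm
      _ ≤ max (2 * D * C0) C1 * (m:ℝ)^((k:ℝ) - δ) :=
          mul_le_mul (le_max_right _ _) hone zero_le_one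
            (le_trans hC10 (le_max_right _ _))
end

section
/- Let P(x,y) ∈ ℂ[x,y] be irreducible with deg_x P > 0 and deg_y P > 0. If the set {(α,β) ∈ ℂ² : |α| = 1, |β| = 1, and P(α,β) = 0} is infinite, then P⋆ = c·P for some constant c ∈ ℂ. -/
open MvPolynomial Polynomial

set_option maxHeartbeats 1000000
set_option synthInstance.maxHeartbeats 400000

theorem aux15_alt {R : Type*} [CommRing R] [IsDomain R] [NormalizedGCDMonoid R]
    {P' Q' : R[X]} (hprim : P'.IsPrimitive) (hirr : Irreducible P') :
    P' ∣ Q' ∨ ∃ A B : R[X], ∃ d : R, d ≠ 0 ∧ A * P' + B * Q' = Polynomial.C d := by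
  classical
  set K := FractionRing R
  by_cases hq : P'.map (algebraMap R K) ∣ Q'.map (algebraMap R K)
  · left
    by_cases hQ0 : Q' = 0
    · simp [hQ0]
    have hcont : Q'.content ≠ 0 := by rwa [Ne, Polynomial.content_eq_zero_iff]
    have hcK : algebraMap R K Q'.content ≠ 0 := fun h =>
      hcont (IsFractionRing.injective R K (by rw [h, map_zero]))
    have hunit : IsUnit (Polynomial.C (algebraMap R K Q'.content)) :=
      Polynomial.isUnit_C.mpr (isUnit_iff_ne_zero.mpr hcK)
    have hass : Associated (Q'.primPart.map (algebraMap R K)) (Q'.map (algebraMap R K)) := by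
      conv_rhs => rw [Q'.eq_C_content_mul_primPart]
      rw [Polynomial.map_mul, Polynomial.map_C]
      exact ⟨hunit.unit, by rw [IsUnit.unit_spec, mul_comm]⟩
    have hdvdprim : P'.map (algebraMap R K) ∣ Q'.primPart.map (algebraMap R K) :=
      (hass.dvd_iff_dvd_right).mpr hq
    have : P' ∣ Q'.primPart :=
      hprim.dvd_of_fraction_map_dvd_fraction_map hdvdprim
    exact this.trans Q'.primPart_dvd
  · right
    have hpirr : Irreducible (P'.map (algebraMap R K)) :=
      (hprim.irreducible_iff_irreducible_map_fraction_map).mp hirr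
    have hcop : IsCoprime (P'.map (algebraMap R K)) (Q'.map (algebraMap R K)) :=
      (hpirr.coprime_iff_not_dvd).mpr hq
    obtain ⟨a, b, hab⟩ := hcop
    obtain ⟨⟨da, hda⟩, hA⟩ :=
      IsLocalization.integerNormalization_map_to_map (nonZeroDivisors R) a
    obtain ⟨⟨db, hdb⟩, hB⟩ :=
      IsLocalization.integerNormalization_map_to_map (nonZeroDivisors R) b
    rw [Algebra.smul_def, Polynomial.algebraMap_apply] at hA hB
    refine ⟨IsLocalization.integerNormalization (nonZeroDivisors R) a * Polynomial.C db,
      IsLocalization.integerNormalization (nonZeroDivisors R) b * Polynomial.C da,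
      da * db, mul_ne_zero (nonZeroDivisors.ne_zero hda) (nonZeroDivisors.ne_zero hdb), ?_⟩
    apply Polynomial.map_injective (algebraMap R K) (IsFractionRing.injective R K)
    rw [Polynomial.map_add, Polynomial.map_mul, Polynomial.map_mul, Polynomial.map_mul,
      Polynomial.map_mul, Polynomial.map_C, Polynomial.map_C, Polynomial.map_C, hA, hB,
      map_mul, Polynomial.C_mul]
    push_cast
    linear_combination (Polynomial.C (algebraMap R K da) * Polynomial.C (algebraMap R K db)) * hab

noncomputable def aux15ψ : MvPolynomial (Fin 1) ℂ →+* Polynomial ℂ :=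
  (Polynomial.mapRingHom (MvPolynomial.eval (Fin.elim0 : Fin 0 → ℂ))).comp
    ((MvPolynomial.finSuccEquiv ℂ 0) : MvPolynomial (Fin 1) ℂ →+* Polynomial (MvPolynomial (Fin 0) ℂ))

noncomputable def aux15χ : Polynomial ℂ →+* MvPolynomial (Fin 1) ℂ :=
  Polynomial.eval₂RingHom (MvPolynomial.C) (MvPolynomial.X 0)

noncomputable def aux15φ : MvPolynomial (Fin 1) ℂ ≃+* Polynomial ℂ :=
  (fun h₂ h₁ => RingEquiv.ofRingHom aux15ψ aux15χ h₁ h₂)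
    (by apply MvPolynomial.ringHom_ext
        · intro r; simp [aux15ψ, aux15χ, MvPolynomial.finSuccEquiv_apply, MvPolynomial.eval₂Hom_C]
        · intro i
          have : i = 0 := Subsingleton.elim _ _
          subst this
          simp [aux15ψ, aux15χ, MvPolynomial.finSuccEquiv_X_zero])
    (by apply Polynomial.ringHom_ext
        · intro a; simp [aux15ψ, aux15χ, MvPolynomial.finSuccEquiv_apply, MvPolynomial.eval₂Hom_C]
        · simp [aux15ψ, aux15χ, MvPolynomial.finSuccEquiv_X_zero])

lemma aux15_eval_φ (g : MvPolynomial (Fin 1) ℂ) (β : ℂ) :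
    MvPolynomial.eval (fun _ => β) g = Polynomial.eval β (aux15φ g) := by
  have h := MvPolynomial.eval_eq_eval_mv_eval' (Fin.elim0 : Fin 0 → ℂ) β g
  have h1 : (fun _ : Fin 1 => β) = Fin.cons β (Fin.elim0 : Fin 0 → ℂ) := by
    funext i; fin_cases i; rfl
  rw [h1, h]; rfl

lemma aux15_eval_bridge (F : MvPolynomial (Fin 2) ℂ) (α β : ℂ) :
    MvPolynomial.eval ![α, β] F =
      Polynomial.eval α (Polynomial.map (MvPolynomial.eval (fun _ : Fin 1 => β))
        (MvPolynomial.finSuccEquiv ℂ 1 F)) := by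
  have h1 : (![α, β] : Fin 2 → ℂ) = Fin.cons α (fun _ : Fin 1 => β) := by
    funext i; fin_cases i <;> rfl
  rw [h1, MvPolynomial.eval_eq_eval_mv_eval']

theorem aux15_dvd (P Q : MvPolynomial (Fin 2) ℂ) (hirr : Irreducible P)
    (hdx : 0 < P.degreeOf 0)
    (hinf : {p : ℂ × ℂ | MvPolynomial.eval ![p.1, p.2] P = 0 ∧
        MvPolynomial.eval ![p.1, p.2] Q = 0}.Infinite) :
    P ∣ Q := by
  classical
  letI : StrongNormalizationMonoid (MvPolynomial (Fin 1) ℂ) :=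
    UniqueFactorizationMonoid.normalizationMonoid
  letI : NormalizedGCDMonoid (MvPolynomial (Fin 1) ℂ) :=
    UniqueFactorizationMonoid.toNormalizedGCDMonoid (MvPolynomial (Fin 1) ℂ)
  have hP'irr : Irreducible (MvPolynomial.finSuccEquiv ℂ 1 P) :=
    hirr.map (MvPolynomial.finSuccEquiv ℂ 1)
  have hP'deg : 0 < (MvPolynomial.finSuccEquiv ℂ 1 P).natDegree := by
    rw [MvPolynomial.natDegree_finSuccEquiv]; exact hdx
  have hprim : (MvPolynomial.finSuccEquiv ℂ 1 P).IsPrimitive := by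
    intro r hr
    rcases hr with ⟨t, ht⟩
    rcases hP'irr.isUnit_or_isUnit ht with h | h
    · exact Polynomial.isUnit_C.mp h
    · exfalso
      rcases Polynomial.isUnit_iff.mp h with ⟨u, hu, hut⟩
      rw [← hut, ← Polynomial.C_mul] at ht
      have := congrArg Polynomial.natDegree ht
      simp only [Polynomial.natDegree_C] at this
      omega
  have hpβ : ∀ β : ℂ,
      Polynomial.map (MvPolynomial.eval (fun _ : Fin 1 => β))
        (MvPolynomial.finSuccEquiv ℂ 1 P) ≠ 0 := by
    intro β h0
    have hwdvd : Polynomial.C (aux15φ.symm (Polynomial.X - Polynomial.C β)) ∣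
        MvPolynomial.finSuccEquiv ℂ 1 P := by
      rw [Polynomial.C_dvd_iff_dvd_coeff]
      intro i
      have hci : MvPolynomial.eval (fun _ : Fin 1 => β)
          ((MvPolynomial.finSuccEquiv ℂ 1 P).coeff i) = 0 := by
        have := congrArg (fun p => Polynomial.coeff p i) h0
        simpa [Polynomial.coeff_map] using this
      rw [aux15_eval_φ] at hci
      have hdv : (Polynomial.X - Polynomial.C β) ∣
          aux15φ ((MvPolynomial.finSuccEquiv ℂ 1 P).coeff i) := by
        rw [Polynomial.dvd_iff_isRoot]; exact hci
      have h2 := map_dvd aux15φ.symm hdv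
      simpa using h2
    have hwunit := hprim _ hwdvd
    have hXunit : IsUnit (Polynomial.X - Polynomial.C β) := by
      have := hwunit.map aux15φ
      simpa using this
    exact Polynomial.not_isUnit_of_natDegree_pos _ (by simp) hXunit
  rcases aux15_alt hprim hP'irr (Q' := MvPolynomial.finSuccEquiv ℂ 1 Q) with h | ⟨A, B, d, hd0, hE⟩
  · rcases h with ⟨t, ht⟩
    refine ⟨(MvPolynomial.finSuccEquiv ℂ 1).symm t, ?_⟩
    apply (MvPolynomial.finSuccEquiv ℂ 1).injective
    rw [map_mul, ht]
    simp
  · exfalso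
    have hzero : ∀ p : ℂ × ℂ, MvPolynomial.eval ![p.1, p.2] P = 0 →
        MvPolynomial.eval ![p.1, p.2] Q = 0 →
        Polynomial.eval p.2 (aux15φ d) = 0 := by
      rintro ⟨α, β⟩ hPz hQz
      have hev := congrArg (fun (F : Polynomial (MvPolynomial (Fin 1) ℂ)) =>
        Polynomial.eval α (F.map (MvPolynomial.eval (fun _ : Fin 1 => β)))) hE
      simp only [Polynomial.map_add, Polynomial.map_mul, Polynomial.map_C,
        Polynomial.eval_add, Polynomial.eval_mul, Polynomial.eval_C] at hev
      rw [← aux15_eval_bridge, ← aux15_eval_bridge] at hev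
      dsimp only at hPz hQz
      rw [hPz, hQz, aux15_eval_φ] at hev
      simpa using hev.symm
    have hD0 : aux15φ d ≠ 0 := by
      simpa using (map_ne_zero_iff aux15φ aux15φ.injective).mpr hd0
    have hsub : {p : ℂ × ℂ | MvPolynomial.eval ![p.1, p.2] P = 0 ∧
          MvPolynomial.eval ![p.1, p.2] Q = 0} ⊆
        ⋃ β ∈ {b : ℂ | Polynomial.IsRoot (aux15φ d) b},
          (fun α => (α, β)) '' {α : ℂ | Polynomial.IsRoot
            (Polynomial.map (MvPolynomial.eval (fun _ : Fin 1 => β))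
              (MvPolynomial.finSuccEquiv ℂ 1 P)) α} := by
      rintro ⟨α, β⟩ ⟨hPz, hQz⟩
      refine Set.mem_biUnion (hzero (α, β) hPz hQz) ?_
      refine ⟨α, ?_, rfl⟩
      show Polynomial.IsRoot _ α
      rw [Polynomial.IsRoot, ← aux15_eval_bridge]
      exact hPz
    have hfin : (⋃ β ∈ {b : ℂ | Polynomial.IsRoot (aux15φ d) b},
        (fun α => (α, β)) '' {α : ℂ | Polynomial.IsRoot
          (Polynomial.map (MvPolynomial.eval (fun _ : Fin 1 => β))
            (MvPolynomial.finSuccEquiv ℂ 1 P)) α}).Finite := by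
      refine Set.Finite.biUnion (Polynomial.finite_setOf_isRoot hD0) ?_
      intro β _
      exact (Polynomial.finite_setOf_isRoot (hpβ β)).image _
    exact hinf (hfin.subset hsub)

lemma aux15_degreeOf_mul_zero (f g : MvPolynomial (Fin 2) ℂ) (hf : f ≠ 0) (hg : g ≠ 0) :
    MvPolynomial.degreeOf 0 (f * g) =
      MvPolynomial.degreeOf 0 f + MvPolynomial.degreeOf 0 g := by
  have hf' : MvPolynomial.finSuccEquiv ℂ 1 f ≠ 0 := by
    simpa using (map_ne_zero_iff _ (MvPolynomial.finSuccEquiv ℂ 1).injective).mpr hf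
  have hg' : MvPolynomial.finSuccEquiv ℂ 1 g ≠ 0 := by
    simpa using (map_ne_zero_iff _ (MvPolynomial.finSuccEquiv ℂ 1).injective).mpr hg
  rw [← MvPolynomial.natDegree_finSuccEquiv, ← MvPolynomial.natDegree_finSuccEquiv,
    ← MvPolynomial.natDegree_finSuccEquiv, map_mul]
  exact Polynomial.natDegree_mul hf' hg'

lemma aux15_degreeOf_swap (i : Fin 2) (h : MvPolynomial (Fin 2) ℂ) :
    MvPolynomial.degreeOf i h =
      MvPolynomial.degreeOf 0 (MvPolynomial.rename (Equiv.swap (0 : Fin 2) i) h) := by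
  have hinj : Function.Injective (Equiv.swap (0 : Fin 2) i) := (Equiv.swap 0 i).injective
  have key := MvPolynomial.degreeOf_rename_of_injective
    (p := MvPolynomial.rename (Equiv.swap (0 : Fin 2) i) h) hinj 0
  rw [MvPolynomial.rename_rename] at key
  rw [show ((Equiv.swap (0 : Fin 2) i) ∘ (Equiv.swap (0 : Fin 2) i)) = id from
    funext fun x => Equiv.swap_apply_self _ _ x] at key
  rw [MvPolynomial.rename_id, Equiv.swap_apply_left] at key
  exact key

lemma aux15_degreeOf_mul (f g : MvPolynomial (Fin 2) ℂ) (hf : f ≠ 0) (hg : g ≠ 0) (i : Fin 2) :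
    MvPolynomial.degreeOf i (f * g) =
      MvPolynomial.degreeOf i f + MvPolynomial.degreeOf i g := by
  rw [aux15_degreeOf_swap i (f * g), aux15_degreeOf_swap i f, aux15_degreeOf_swap i g, map_mul]
  have hr : Function.Injective
      (MvPolynomial.rename (R := ℂ) (Equiv.swap (0 : Fin 2) i)) :=
    MvPolynomial.rename_injective _ (Equiv.swap 0 i).injective
  exact aux15_degreeOf_mul_zero _ _ (fun h => hf (by simpa using hr (by simpa using h)))
    (fun h => hg (by simpa using hr (by simpa using h)))

lemma aux15_eq_C (t : MvPolynomial (Fin 2) ℂ) (h0 : MvPolynomial.degreeOf 0 t = 0)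
    (h1 : MvPolynomial.degreeOf 1 t = 0) : t = MvPolynomial.C (t.coeff 0) := by
  apply MvPolynomial.ext
  intro m
  by_cases hm : m = 0
  · subst hm; simp
  · rw [MvPolynomial.coeff_C, if_neg (Ne.symm hm)]
    by_contra hne
    have hmem : m ∈ t.support := by
      rw [MvPolynomial.mem_support_iff]; exact hne
    have hle : ∀ i : Fin 2, m i ≤ MvPolynomial.degreeOf i t := by
      intro i
      rw [MvPolynomial.degreeOf_eq_sup]
      exact Finset.le_sup (f := fun m => m i) hmem
    apply hm
    ext i
    fin_cases i
    · have h := hle 0; rw [h0] at h; simpa using Nat.le_zero.mp h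
    · have h := hle 1; rw [h1] at h; simpa using Nat.le_zero.mp h

theorem stmt15 (P : MvPolynomial (Fin 2) ℂ) (hirr : Irreducible P)
    (hdx : 0 < P.degreeOf 0) (hdy : 0 < P.degreeOf 1)
    (hinf : {p : ℂ × ℂ | ‖p.1‖ = 1 ∧ ‖p.2‖ = 1 ∧
      MvPolynomial.eval ![p.1, p.2] P = 0}.Infinite) :
    -- `P⋆ = c·P`, expressed through the defining property of the reciprocal polynomial
    ∃ c : ℂ, ∀ x y : ℂ, x ≠ 0 → y ≠ 0 →
      x ^ P.degreeOf 0 * y ^ P.degreeOf 1 *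
        (starRingEnd ℂ)
          (MvPolynomial.eval ![1 / (starRingEnd ℂ) x, 1 / (starRingEnd ℂ) y] P)
        = c * MvPolynomial.eval ![x, y] P := by
  classical
  set Q : MvPolynomial (Fin 2) ℂ := ∑ m ∈ P.support, MvPolynomial.monomial
      (Finsupp.single 0 (P.degreeOf 0 - m 0) + Finsupp.single 1 (P.degreeOf 1 - m 1))
      ((starRingEnd ℂ) (P.coeff m)) with hQ
  -- the key evaluation identity
  have hkey : ∀ x y : ℂ, x ≠ 0 → y ≠ 0 →
      x ^ P.degreeOf 0 * y ^ P.degreeOf 1 *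
        (starRingEnd ℂ)
          (MvPolynomial.eval ![1 / (starRingEnd ℂ) x, 1 / (starRingEnd ℂ) y] P)
        = MvPolynomial.eval ![x, y] Q := by
    intro x y hx hy
    rw [hQ, map_sum, MvPolynomial.eval_eq', map_sum, Finset.mul_sum]
    refine Finset.sum_congr rfl ?_
    intro m hm
    have hm0 : m 0 ≤ P.degreeOf 0 := by
      rw [MvPolynomial.degreeOf_eq_sup]
      exact Finset.le_sup (f := fun m => m 0) hm
    have hm1 : m 1 ≤ P.degreeOf 1 := by
      rw [MvPolynomial.degreeOf_eq_sup]
      exact Finset.le_sup (f := fun m => m 1) hm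
    rw [MvPolynomial.eval_monomial]
    simp only [Fin.prod_univ_two, Matrix.cons_val_zero, Matrix.cons_val_one, Matrix.head_cons,
      map_mul, map_pow, Finsupp.coe_add, Pi.add_apply, Finsupp.single_apply, map_div₀, map_one,
      Complex.conj_conj]
    norm_num
    rw [pow_sub₀ x hx hm0, pow_sub₀ y hy hm1]
    field_simp
  -- degree bounds on Q
  have hQdeg : ∀ i : Fin 2, (h : i = 0 ∨ i = 1) → True := fun _ _ => trivial
  have hQd0 : Q.degreeOf 0 ≤ P.degreeOf 0 := by
    rw [hQ]
    apply MvPolynomial.degreeOf_le_iff.mpr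
    intro m hm
    obtain ⟨m', hm', hmem⟩ := Finset.mem_biUnion.mp (MvPolynomial.support_sum hm)
    have := MvPolynomial.support_monomial_subset hmem
    rw [Finset.mem_singleton] at this
    subst this
    simp [Finsupp.single_apply]
  have hQd1 : Q.degreeOf 1 ≤ P.degreeOf 1 := by
    rw [hQ]
    apply MvPolynomial.degreeOf_le_iff.mpr
    intro m hm
    obtain ⟨m', hm', hmem⟩ := Finset.mem_biUnion.mp (MvPolynomial.support_sum hm)
    have := MvPolynomial.support_monomial_subset hmem
    rw [Finset.mem_singleton] at this
    subst this
    simp [Finsupp.single_apply]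
  -- P divides Q
  have hdvd : P ∣ Q := by
    apply aux15_dvd P Q hirr hdx
    apply hinf.mono
    rintro ⟨α, β⟩ ⟨hα, hβ, hz⟩
    have hα0 : α ≠ 0 := by
      intro h; rw [h] at hα; simp at hα
    have hβ0 : β ≠ 0 := by
      intro h; rw [h] at hβ; simp at hβ
    have h1 : 1 / (starRingEnd ℂ) α = α := by
      rw [div_eq_iff (by simpa using hα0)]
      have hmc : α * (starRingEnd ℂ) α = 1 := by
        rw [Complex.mul_conj]
        norm_cast
        rw [Complex.normSq_eq_norm_sq, hα]; norm_num
      exact hmc.symm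
    have h2 : 1 / (starRingEnd ℂ) β = β := by
      rw [div_eq_iff (by simpa using hβ0)]
      have hmc : β * (starRingEnd ℂ) β = 1 := by
        rw [Complex.mul_conj]
        norm_cast
        rw [Complex.normSq_eq_norm_sq, hβ]; norm_num
      exact hmc.symm
    refine ⟨hz, ?_⟩
    rw [← hkey α β hα0 hβ0, h1, h2]
    dsimp only at hz ⊢
    rw [hz]
    simp
  -- conclude
  obtain ⟨t, ht⟩ := hdvd
  by_cases ht0 : t = 0
  · refine ⟨0, fun x y hx hy => ?_⟩
    rw [hkey x y hx hy, ht, ht0]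
    simp
  · have hP0 : P ≠ 0 := hirr.ne_zero
    have hd0 : MvPolynomial.degreeOf 0 t = 0 := by
      have := aux15_degreeOf_mul P t hP0 ht0 0
      rw [← ht] at this
      omega
    have hd1 : MvPolynomial.degreeOf 1 t = 0 := by
      have := aux15_degreeOf_mul P t hP0 ht0 1
      rw [← ht] at this
      omega
    refine ⟨t.coeff 0, fun x y hx hy => ?_⟩
    rw [hkey x y hx hy, ht, aux15_eq_C t hd0 hd1]
    rw [map_mul]
    simp [mul_comm]
end

section
/- Let P(x,y) ∈ ℂ[x,y] be irreducible with deg_x P > 0 and deg_y P > 0, and suppose P⋆ = c·P for some constant c ∈ ℂ. Write P(x,y) = ∑_{j=0}^{d} a_j(x)·yʲ with a_j(x) ∈ ℂ[x] and d = deg_y P. Let U ⊆ ℂ∖{0} be a connected open set with 1/conj(z) ∈ U whenever z ∈ U, such that for every x ∈ U: a_d(x) ≠ 0 and there is no y ∈ ℂ with P(x,y) = 0 and (∂P/∂y)(x,y) = 0. Let ρ : U → ℂ be holomorphic with P(x, ρ(x)) = 0 for all x ∈ U. If |ρ(α)| = 1 for some α ∈ U with |α| = 1, then |ρ(x)| =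 1 for every x ∈ U with |x| = 1. -/
/-- Evaluation of a bivariate polynomial `P ∈ (ℂ[x])[y]` at the point `(x, y)`. -/
noncomputable def ev (P : Polynomial (Polynomial ℂ)) (x y : ℂ) : ℂ :=
  Polynomial.eval₂ (Polynomial.evalRingHom x) y P

/-- The degree of `P ∈ (ℂ[x])[y]` in the variable `x`. -/
noncomputable def degX (P : Polynomial (Polynomial ℂ)) : ℕ :=
  P.support.sup fun j => (P.coeff j).natDegree

theorem stmt16 (P : Polynomial (Polynomial ℂ)) (hirr : Irreducible P)
    (hdx : 0 < degX P) (hdy : 0 < P.natDegree)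
    -- `P⋆ = c·P`, expressed through the defining property of the reciprocal polynomial
    (hrec : ∃ c : ℂ, ∀ x y : ℂ, x ≠ 0 → y ≠ 0 →
      x ^ degX P * y ^ P.natDegree *
        (starRingEnd ℂ) (ev P (1 / (starRingEnd ℂ) x) (1 / (starRingEnd ℂ) y))
        = c * ev P x y)
    (U : Set ℂ) (hUopen : IsOpen U) (hUconn : IsConnected U)
    (hU0 : ∀ z ∈ U, z ≠ 0)
    (hUinv : ∀ z ∈ U, 1 / (starRingEnd ℂ) z ∈ U)
    (hlead : ∀ x ∈ U, Polynomial.eval x P.leadingCoeff ≠ 0)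
    (hcrit : ∀ x ∈ U, ¬∃ y : ℂ, ev P x y = 0 ∧ ev (Polynomial.derivative P) x y = 0)
    (ρ : ℂ → ℂ) (hρhol : DifferentiableOn ℂ ρ U)
    (hρ : ∀ x ∈ U, ev P x (ρ x) = 0)
    (α : ℂ) (hα : α ∈ U) (hα1 : ‖α‖ = 1) (hρα : ‖ρ α‖ = 1) :
    ∀ x ∈ U, ‖x‖ = 1 → ‖ρ x‖ = 1 := by
  classical
  obtain ⟨c, hc⟩ := hrec
  have hP0 : P ≠ 0 := hirr.ne_zero
  -- sum formula for ev
  have hev : ∀ x y : ℂ, ev P x y = ∑ j ∈ P.support, (P.coeff j).eval x * y ^ j := by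
    intro x y
    rw [ev, Polynomial.eval₂_eq_sum, Polynomial.sum_def]
    rfl
  have hev0 : ∀ x : ℂ, ev P x 0 = (P.coeff 0).eval x := by
    intro x; rw [ev, Polynomial.eval₂_at_zero]; rfl
  -- unit circle helper
  have hunit : ∀ z : ℂ, ‖z‖ = 1 → (starRingEnd ℂ) z = z⁻¹ := by
    intro z hz
    have h1 : z * (starRingEnd ℂ) z = 1 := by
      rw [Complex.mul_conj, Complex.normSq_eq_norm_sq, hz]; norm_num
    exact eq_inv_of_mul_eq_one_right h1
  -- Lemma B : limit y → 0 of the reciprocal relation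
  have hB : ∀ x ∈ U, c * (P.coeff 0).eval x
      = x ^ degX P * (starRingEnd ℂ)
          (Polynomial.eval (1 / (starRingEnd ℂ) x) P.leadingCoeff) := by
    intro x hx
    have hx0 : x ≠ 0 := hU0 x hx
    set x' : ℂ := 1 / (starRingEnd ℂ) x with hx'
    have hfun : (fun y : ℂ => c * ev P x y)
        = fun y : ℂ => x ^ degX P * ∑ j ∈ P.support,
            (starRingEnd ℂ) ((P.coeff j).eval x') * y ^ (P.natDegree - j) := by
      apply Continuous.ext_on (dense_compl_singleton (0:ℂ))
      · have : Continuous fun y : ℂ => ev P x y := by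
          simp only [hev]
          exact continuous_finset_sum _ fun j _ => continuous_const.mul (continuous_pow j)
        exact continuous_const.mul this
      · exact continuous_const.mul (continuous_finset_sum _ fun j _ =>
          continuous_const.mul (continuous_pow _))
      · intro y hy
        have hy0 : y ≠ 0 := hy
        show c * ev P x y = _
        rw [← hc x y hx0 hy0]
        have hconj : (starRingEnd ℂ) (ev P x' (1 / (starRingEnd ℂ) y))
            = ∑ j ∈ P.support, (starRingEnd ℂ) ((P.coeff j).eval x') * (y⁻¹) ^ j := by
          rw [hev, map_sum]
          simp [map_div₀, one_div]
        rw [hconj]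
        show _ = x ^ degX P * ∑ j ∈ P.support,
            (starRingEnd ℂ) ((P.coeff j).eval x') * y ^ (P.natDegree - j)
        rw [Finset.mul_sum, Finset.mul_sum]
        refine Finset.sum_congr rfl fun j hj => ?_
        have hjle : j ≤ P.natDegree := Polynomial.le_natDegree_of_mem_supp j hj
        have : y ^ P.natDegree * (y⁻¹) ^ j = y ^ (P.natDegree - j) := by
          rw [inv_pow, pow_sub₀ y hy0 hjle]
        calc x ^ degX P * y ^ P.natDegree *
              ((starRingEnd ℂ) ((P.coeff j).eval x') * (y⁻¹) ^ j)
            = x ^ degX P * ((starRingEnd ℂ) ((P.coeff j).eval x') *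
                (y ^ P.natDegree * (y⁻¹) ^ j)) := by ring
          _ = _ := by rw [this]
    have h0 := congrFun hfun 0
    rw [hev0] at h0
    rw [h0]
    congr 1
    rw [Finset.sum_eq_single P.natDegree]
    · rw [Nat.sub_self, pow_zero, mul_one, Polynomial.coeff_natDegree]
    · intro j hj hne
      have hjlt : j < P.natDegree := lt_of_le_of_ne (Polynomial.le_natDegree_of_mem_supp j hj) hne
      rw [zero_pow (Nat.sub_ne_zero_of_lt hjlt), mul_zero]
    · intro h
      exact absurd (Polynomial.natDegree_mem_support_of_nonzero hP0) h
  -- c ≠ 0 and a₀ nonvanishing on U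
  have hBα := hB α hα
  have hRHSne : ∀ x ∈ U, x ^ degX P * (starRingEnd ℂ)
      (Polynomial.eval (1 / (starRingEnd ℂ) x) P.leadingCoeff) ≠ 0 := by
    intro x hx
    exact mul_ne_zero (pow_ne_zero _ (hU0 x hx))
      ((map_ne_zero _).mpr (hlead _ (hUinv x hx)))
  have hcne : c ≠ 0 := by
    intro h
    rw [h, zero_mul] at hBα
    exact hRHSne α hα hBα.symm
  have ha0 : ∀ x ∈ U, (P.coeff 0).eval x ≠ 0 := by
    intro x hx h
    have hBx := hB x hx
    rw [h, mul_zero] at hBx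
    exact hRHSne x hx hBx.symm
  -- ρ nonvanishing on U
  have hρ0 : ∀ x ∈ U, ρ x ≠ 0 := by
    intro x hx h
    have := hρ x hx
    rw [h, hev0] at this
    exact ha0 x hx this
  -- the companion root σ
  set σ : ℂ → ℂ := fun x => ((starRingEnd ℂ) (ρ (1 / (starRingEnd ℂ) x)))⁻¹ with hσdef
  have hσ0 : ∀ x ∈ U, σ x ≠ 0 := fun x hx =>
    inv_ne_zero ((map_ne_zero _).mpr (hρ0 _ (hUinv x hx)))
  have hσroot : ∀ x ∈ U, ev P x (σ x) = 0 := by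
    intro x hx
    have hx0 : x ≠ 0 := hU0 x hx
    have key := hc x (σ x) hx0 (hσ0 x hx)
    have hinner : 1 / (starRingEnd ℂ) (σ x) = ρ (1 / (starRingEnd ℂ) x) := by
      rw [hσdef]
      simp [one_div, map_inv₀, Complex.conj_conj]
    rw [hinner, hρ _ (hUinv x hx), map_zero, mul_zero] at key
    exact (mul_eq_zero.mp key.symm).resolve_left hcne
  -- continuity of ρ and σ on U
  have hρc : ContinuousOn ρ U := hρhol.continuousOn
  have hconjc : Continuous fun z : ℂ => (starRingEnd ℂ) z := Complex.continuous_conj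
  have hinvc : ContinuousOn (fun z : ℂ => 1 / (starRingEnd ℂ) z) U := by
    simp only [one_div]
    exact (hconjc.continuousOn).inv₀ fun z hz => (map_ne_zero _).mpr (hU0 z hz)
  have hσc : ContinuousOn σ U := by
    have h1 : ContinuousOn (fun x => ρ (1 / (starRingEnd ℂ) x)) U :=
      hρc.comp hinvc (fun z hz => hUinv z hz)
    have h2 : ContinuousOn (fun x => (starRingEnd ℂ) (ρ (1 / (starRingEnd ℂ) x))) U :=
      hconjc.comp_continuousOn h1
    exact h2.inv₀ fun x hx => (map_ne_zero _).mpr (hρ0 _ (hUinv x hx))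
  -- divided differences
  set F : ℂ → ℂ → ℂ → ℂ := fun x y z => ∑ j ∈ P.support,
      (P.coeff j).eval x * (∑ i ∈ Finset.range j, y ^ i * z ^ (j - 1 - i)) with hFdef
  have hG1 : ∀ x y z : ℂ, (y - z) * F x y z = ev P x y - ev P x z := by
    intro x y z
    rw [hFdef, hev, hev, ← Finset.sum_sub_distrib, Finset.mul_sum]
    refine Finset.sum_congr rfl fun j _ => ?_
    have := geom_sum₂_mul y z j
    linear_combination (P.coeff j).eval x * this
  have hG2 : ∀ x y : ℂ, F x y y = ev (Polynomial.derivative P) x y := by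
    intro x y
    rw [ev, Polynomial.derivative_apply, Polynomial.sum_def, Polynomial.eval₂_finset_sum]
    refine Finset.sum_congr rfl fun j hj => ?_
    rw [Polynomial.eval₂_mul, Polynomial.eval₂_C, Polynomial.eval₂_X_pow]
    have hsum : (∑ i ∈ Finset.range j, y ^ i * y ^ (j - 1 - i)) = (j : ℂ) * y ^ (j - 1) := by
      rw [Finset.sum_congr rfl (fun i hi => ?_), Finset.sum_const, Finset.card_range,
        nsmul_eq_mul]
      rw [← pow_add]
      congr 1
      have := Finset.mem_range.mp hi
      omega
    rw [hsum]
    simp only [map_mul, map_natCast, Polynomial.coe_evalRingHom]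
    ring
  have hGc : ContinuousOn (fun x => F x (ρ x) (σ x)) U := by
    refine continuousOn_finset_sum _ fun j _ => ?_
    refine ContinuousOn.mul ((Polynomial.continuous _).continuousOn) ?_
    exact continuousOn_finset_sum _ fun i _ => (hρc.pow i).mul (hσc.pow _)
  -- connectedness argument
  haveI : PreconnectedSpace U := Subtype.preconnectedSpace hUconn.isPreconnected
  set S : Set U := {u : U | ρ u.1 = σ u.1} with hSdef
  have hSclosed : IsClosed S :=
    isClosed_eq (hρc.restrict) (hσc.restrict)
  have hSopen : IsOpen S := by
    rw [isOpen_iff_mem_nhds]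
    rintro ⟨x₀, hx₀⟩ hu
    have hx₀S : ρ x₀ = σ x₀ := hu
    have hder : ev (Polynomial.derivative P) x₀ (ρ x₀) ≠ 0 := by
      intro h
      exact hcrit x₀ hx₀ ⟨ρ x₀, hρ x₀ hx₀, h⟩
    have hFne : F x₀ (ρ x₀) (σ x₀) ≠ 0 := by
      rw [← hx₀S, hG2]; exact hder
    have hGat : ContinuousAt (fun x => F x (ρ x) (σ x)) x₀ :=
      hGc.continuousAt (hUopen.mem_nhds hx₀)
    have hev_ne : ∀ᶠ x in nhds x₀, F x (ρ x) (σ x) ≠ 0 ∧ x ∈ U := by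
      filter_upwards [hGat.eventually_ne hFne, hUopen.mem_nhds hx₀] with x h1 h2
      exact ⟨h1, h2⟩
    have hpre : Subtype.val ⁻¹' {x : ℂ | F x (ρ x) (σ x) ≠ 0 ∧ x ∈ U} ∈ nhds (⟨x₀, hx₀⟩ : U) :=
      continuous_subtype_val.continuousAt.preimage_mem_nhds hev_ne
    refine Filter.mem_of_superset hpre ?_
    rintro ⟨x, hxU⟩ ⟨hFx, hxU'⟩
    have heq : (ρ x - σ x) * F x (ρ x) (σ x) = 0 := by
      rw [hG1, hρ x hxU', hσroot x hxU', sub_zero]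
    have := (mul_eq_zero.mp heq).resolve_right hFx
    exact sub_eq_zero.mp this
  have hSne : S.Nonempty := by
    refine ⟨⟨α, hα⟩, ?_⟩
    show ρ α = ((starRingEnd ℂ) (ρ (1 / (starRingEnd ℂ) α)))⁻¹
    have h1 : (1 : ℂ) / (starRingEnd ℂ) α = α := by
      rw [hunit α hα1, one_div, inv_inv]
    rw [h1, hunit (ρ α) hρα, inv_inv]
  have hSuniv : S = Set.univ := (IsClopen.eq_univ ⟨hSclosed, hSopen⟩) hSne
  have hρσ : ∀ x ∈ U, ρ x = σ x := by
    intro x hx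
    have : (⟨x, hx⟩ : U) ∈ S := by rw [hSuniv]; trivial
    exact this
  -- conclusion
  intro x hx hx1
  have h1 : (1 : ℂ) / (starRingEnd ℂ) x = x := by
    rw [hunit x hx1, one_div, inv_inv]
  have h2 : ρ x = ((starRingEnd ℂ) (ρ x))⁻¹ := by
    have h' : ρ x = ((starRingEnd ℂ) (ρ (1 / (starRingEnd ℂ) x)))⁻¹ := hρσ x hx
    rw [h1] at h'
    exact h'
  have h3 : ρ x * (starRingEnd ℂ) (ρ x) = 1 := by
    nth_rewrite 1 [h2]
    exact inv_mul_cancel₀ ((map_ne_zero _).mpr (hρ0 x hx))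
  have h4 : (Complex.normSq (ρ x) : ℂ) = 1 := by rw [← Complex.mul_conj]; exact h3
  have h5 : Complex.normSq (ρ x) = 1 := by exact_mod_cast h4
  have h6 : ‖ρ x‖ ^ 2 = 1 := by rw [← Complex.normSq_eq_norm_sq]; exact h5
  nlinarith [norm_nonneg (ρ x)]
end

section
/- Let P(x,y) ∈ ℂ[x,y] be irreducible with deg_x P > 0 and deg_y P > 0, with every coefficient of P algebraic over ℚ, and suppose there is no constant c ∈ ℂ with P⋆ = c·P. Then for every (α,β) ∈ ℂ² with |α| = 1, |β| = 1, and P(α,β) = 0, both α and β are algebraic over ℚ. -/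
set_option maxHeartbeats 1000000
set_option synthInstance.maxHeartbeats 400000
namespace St17
open Polynomial

noncomputable abbrev sg (j k : ℕ) : Fin 2 →₀ ℕ := Finsupp.single 0 j + Finsupp.single 1 k

lemma fin2_cases (i : Fin 2) : i = 0 ∨ i = 1 := by fin_cases i <;> simp

lemma sg_apply0 (j k : ℕ) : sg j k 0 = j := by
  simp [sg, Finsupp.single_apply]

lemma sg_apply1 (j k : ℕ) : sg j k 1 = k := by
  simp [sg, Finsupp.single_apply]

lemma fin2_eq (m : Fin 2 →₀ ℕ) : sg (m 0) (m 1) = m := by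
  ext i
  rcases fin2_cases i with rfl | rfl
  · exact sg_apply0 _ _
  · exact sg_apply1 _ _

lemma sg_eq_zero_iff (j k : ℕ) : sg j k = 0 ↔ j = 0 ∧ k = 0 := by
  constructor
  · intro h
    exact ⟨by rw [← sg_apply0 j k, h]; rfl, by rw [← sg_apply1 j k, h]; rfl⟩
  · rintro ⟨rfl, rfl⟩; simp [sg]

lemma sg_sub0 (j k : ℕ) : sg (j + 1) k - Finsupp.single 0 1 = sg j k := by
  ext i
  rcases fin2_cases i with rfl | rfl <;>
    simp [sg, Finsupp.single_apply, Finsupp.sub_apply]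

lemma sg_sub1 (j k : ℕ) : sg j (k + 1) - Finsupp.single 1 1 = sg j k := by
  ext i
  rcases fin2_cases i with rfl | rfl <;>
    simp [sg, Finsupp.single_apply, Finsupp.sub_apply]


variable {R : Type*} [CommRing R]

noncomputable def toBiv : MvPolynomial (Fin 2) R →+* Polynomial (Polynomial R) :=
  MvPolynomial.eval₂Hom (C.comp C) ![X, C X]

noncomputable def ofBiv : Polynomial (Polynomial R) →+* MvPolynomial (Fin 2) R :=
  eval₂RingHom (eval₂RingHom MvPolynomial.C (MvPolynomial.X 1)) (MvPolynomial.X 0)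

@[simp] lemma toBiv_C (a : R) : toBiv (MvPolynomial.C a) = C (C a) := by
  simp [toBiv]

@[simp] lemma toBiv_X0 : toBiv (MvPolynomial.X 0 : MvPolynomial (Fin 2) R) = X := by
  simp [toBiv]

@[simp] lemma toBiv_X1 : toBiv (MvPolynomial.X 1 : MvPolynomial (Fin 2) R) = C X := by
  simp [toBiv]

@[simp] lemma ofBiv_CC (a : R) : ofBiv (C (C a)) = MvPolynomial.C a := by
  simp [ofBiv]

@[simp] lemma ofBiv_CX : ofBiv (C X) = (MvPolynomial.X 1 : MvPolynomial (Fin 2) R) := by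
  simp [ofBiv]

@[simp] lemma ofBiv_X : ofBiv X = (MvPolynomial.X 0 : MvPolynomial (Fin 2) R) := by
  simp [ofBiv]

@[simp] lemma ofBiv_toBiv (f : MvPolynomial (Fin 2) R) : ofBiv (toBiv f) = f := by
  have h : (ofBiv.comp (toBiv (R := R))) = RingHom.id _ := by
    apply MvPolynomial.ringHom_ext
    · intro a; simp
    · intro i
      rcases fin2_cases i with rfl | rfl <;> simp
  exact DFunLike.congr_fun h f

@[simp] lemma toBiv_ofBiv (f : Polynomial (Polynomial R)) : toBiv (ofBiv f) = f := by
  have h : ((toBiv (R := R)).comp ofBiv) = RingHom.id _ := by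
    apply Polynomial.ringHom_ext'
    · apply Polynomial.ringHom_ext
      · intro a; simp
      · simp
    · simp
  exact DFunLike.congr_fun h f

noncomputable def bivEquiv : MvPolynomial (Fin 2) R ≃+* Polynomial (Polynomial R) :=
  { toFun := toBiv
    invFun := ofBiv
    left_inv := ofBiv_toBiv
    right_inv := toBiv_ofBiv
    map_mul' := map_mul toBiv
    map_add' := map_add toBiv }

lemma bivEquiv_apply (f : MvPolynomial (Fin 2) R) : bivEquiv f = toBiv f := rfl

lemma toBiv_injective : Function.Injective (toBiv (R := R)) :=
  (bivEquiv (R := R)).injective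

lemma coeff_coeff_toBiv (f : MvPolynomial (Fin 2) R) (j k : ℕ) :
    ((toBiv f).coeff j).coeff k = MvPolynomial.coeff (sg j k) f := by
  classical
  induction f using MvPolynomial.induction_on generalizing j k with
  | C a =>
      rw [toBiv_C, MvPolynomial.coeff_C]
      by_cases hj : j = 0
      · by_cases hk : k = 0
        · subst hj; subst hk
          rw [if_pos (((sg_eq_zero_iff 0 0).2 ⟨rfl, rfl⟩).symm)]
          simp
        · subst hj
          rw [if_neg (fun h => hk ((sg_eq_zero_iff 0 k).1 h.symm).2)]
          simp [Polynomial.coeff_C, hk]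
      · rw [if_neg (fun h => hj ((sg_eq_zero_iff j k).1 h.symm).1)]
        simp [Polynomial.coeff_C, hj]
  | add p q hp hq =>
      simp [hp, hq]
  | mul_X p n hp =>
      rcases fin2_cases n with rfl | rfl
      · rw [map_mul, toBiv_X0, MvPolynomial.coeff_mul_X',
          ← pow_one (X : Polynomial (Polynomial R)), coeff_mul_X_pow']
        rcases j with _ | j
        · rw [if_neg (by simp), if_neg (by simp [Finsupp.mem_support_iff, sg_apply0])]
          simp
        · rw [if_pos (by simp), if_pos (by simp [Finsupp.mem_support_iff, sg_apply0])]
          simp only [Nat.add_sub_cancel]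
          have h' : sg (j+1) k - Finsupp.single 0 1 = sg j k := sg_sub0 j k
          rw [h', hp j k]
      · rw [map_mul, toBiv_X1, MvPolynomial.coeff_mul_X', coeff_mul_C,
          ← pow_one (X : Polynomial R), coeff_mul_X_pow']
        rcases k with _ | k
        · rw [if_neg (by simp), if_neg (by simp [Finsupp.mem_support_iff, sg_apply1])]
        · rw [if_pos (by simp), if_pos (by simp [Finsupp.mem_support_iff, sg_apply1])]
          simp only [Nat.add_sub_cancel]
          have h' : sg j (k+1) - Finsupp.single 1 1 = sg j k := sg_sub1 j k
          rw [h', hp j k]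

lemma exists_support_degreeOf (f : MvPolynomial (Fin 2) R) (hf : f ≠ 0) (i : Fin 2) :
    ∃ m ∈ f.support, m i = f.degreeOf i := by
  have hne : f.support.Nonempty := MvPolynomial.support_nonempty.2 hf
  obtain ⟨m, hm, hm2⟩ := Finset.exists_mem_eq_sup f.support hne (fun m => m i)
  exact ⟨m, hm, by rw [MvPolynomial.degreeOf_eq_sup, hm2]⟩

lemma natDegree_toBiv_le (f : MvPolynomial (Fin 2) R) :
    (toBiv f).natDegree ≤ f.degreeOf 0 := by
  rw [Polynomial.natDegree_le_iff_coeff_eq_zero]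
  intro N hN
  ext k
  rw [coeff_coeff_toBiv, Polynomial.coeff_zero]
  by_contra h
  have := MvPolynomial.monomial_le_degreeOf 0 (MvPolynomial.mem_support_iff.2 h)
  rw [sg_apply0] at this
  omega

lemma natDegree_coeff_toBiv_le (f : MvPolynomial (Fin 2) R) (j : ℕ) :
    ((toBiv f).coeff j).natDegree ≤ f.degreeOf 1 := by
  rw [Polynomial.natDegree_le_iff_coeff_eq_zero]
  intro N hN
  rw [coeff_coeff_toBiv]
  by_contra h
  have := MvPolynomial.monomial_le_degreeOf 1 (MvPolynomial.mem_support_iff.2 h)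
  rw [sg_apply1] at this
  omega

lemma natDegree_toBiv (f : MvPolynomial (Fin 2) R) (hf : f ≠ 0) :
    (toBiv f).natDegree = f.degreeOf 0 := by
  refine le_antisymm (natDegree_toBiv_le f) ?_
  obtain ⟨m, hm, hm0⟩ := exists_support_degreeOf f hf 0
  apply Polynomial.le_natDegree_of_ne_zero
  intro h
  have h2 : ((toBiv f).coeff (f.degreeOf 0)).coeff (m 1) = 0 := by rw [h]; simp
  rw [coeff_coeff_toBiv, ← hm0, fin2_eq] at h2
  exact (MvPolynomial.mem_support_iff.1 hm) h2

lemma exists_coeff_toBiv_natDegree (f : MvPolynomial (Fin 2) R) (hf : f ≠ 0) :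
    ∃ j, (toBiv f).coeff j ≠ 0 ∧ ((toBiv f).coeff j).natDegree = f.degreeOf 1 := by
  obtain ⟨m, hm, hm1⟩ := exists_support_degreeOf f hf 1
  refine ⟨m 0, ?_, ?_⟩
  · intro h
    have h2 : ((toBiv f).coeff (m 0)).coeff (m 1) = 0 := by rw [h]; simp
    rw [coeff_coeff_toBiv, fin2_eq] at h2
    exact (MvPolynomial.mem_support_iff.1 hm) h2
  · refine le_antisymm (natDegree_coeff_toBiv_le f (m 0)) ?_
    rw [← hm1]
    apply Polynomial.le_natDegree_of_ne_zero
    rw [coeff_coeff_toBiv, fin2_eq]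
    exact MvPolynomial.mem_support_iff.1 hm

lemma irreducible_mulEquiv {M N : Type*} [Monoid M] [Monoid N] (e : M ≃* N) {x : M}
    (hx : Irreducible x) : Irreducible (e x) := by
  constructor
  · intro h
    have := h.map e.symm.toMonoidHom
    simp only [MulEquiv.coe_toMonoidHom, MulEquiv.symm_apply_apply] at this
    exact hx.not_isUnit this
  · intro a b hab
    have hx2 : x = e.symm a * e.symm b := by
      apply e.injective
      rw [map_mul]
      simp [hab]
    rcases hx.isUnit_or_isUnit hx2 with h | h
    · left
      have := h.map e.toMonoidHom
      simpa using this
    · right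
      have := h.map e.toMonoidHom
      simpa using this


open scoped Polynomial in
theorem aux (p q : MvPolynomial (Fin 2) ℂ) (hirr : Irreducible p)
    (hd0 : 0 < p.degreeOf 0)
    (hqd0 : q.degreeOf 0 ≤ p.degreeOf 0) (hqd1 : q.degreeOf 1 ≤ p.degreeOf 1)
    (hpalg : ∀ m, IsAlgebraic ℚ (p.coeff m)) (hqalg : ∀ m, IsAlgebraic ℚ (q.coeff m))
    (hne : ¬ ∃ c : ℂ, q = MvPolynomial.C c * p)
    {α β : ℂ} (hpz : MvPolynomial.eval ![α, β] p = 0)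
    (hqz : MvPolynomial.eval ![α, β] q = 0) : IsAlgebraic ℚ β := by
  classical
  set K := algebraicClosure ℚ ℂ with hK
  let i : K →+* ℂ := algebraMap K ℂ
  have hi : Function.Injective i := i.injective
  have lift : ∀ f : MvPolynomial (Fin 2) ℂ, (∀ m, IsAlgebraic ℚ (f.coeff m)) →
      ∃ f₀ : MvPolynomial (Fin 2) K, MvPolynomial.map i f₀ = f := by
    intro f hf
    refine ⟨∑ m ∈ f.support, MvPolynomial.monomial m
      (⟨f.coeff m, mem_algebraicClosure_iff.2 (hf m)⟩ : K), ?_⟩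
    rw [map_sum]
    conv_rhs => rw [f.as_sum]
    refine Finset.sum_congr rfl fun m _ => ?_
    rw [MvPolynomial.map_monomial]
    rfl
  obtain ⟨p₀, hp₀⟩ := lift p hpalg
  obtain ⟨q₀, hq₀⟩ := lift q hqalg
  have hdeg : ∀ (f₀ : MvPolynomial (Fin 2) K) (n : Fin 2),
      (MvPolynomial.map i f₀).degreeOf n = f₀.degreeOf n := by
    intro f₀ n
    rw [MvPolynomial.degreeOf_eq_sup, MvPolynomial.degreeOf_eq_sup,
      MvPolynomial.support_map_of_injective _ hi]
  have hpne : p ≠ 0 := hirr.ne_zero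
  have hqne : q ≠ 0 := by
    intro h
    exact hne ⟨0, by rw [h, map_zero, zero_mul]⟩
  have hp₀ne : p₀ ≠ 0 := by intro h; rw [h, map_zero] at hp₀; exact hpne hp₀.symm
  have hq₀ne : q₀ ≠ 0 := by intro h; rw [h, map_zero] at hq₀; exact hqne hq₀.symm
  set p₁ := toBiv p₀ with hp₁
  set q₁ := toBiv q₀ with hq₁
  have hp₁ne : p₁ ≠ 0 := fun h => hp₀ne (toBiv_injective (by rw [← hp₁, h, map_zero]))
  have hq₁ne : q₁ ≠ 0 := fun h => hq₀ne (toBiv_injective (by rw [← hq₁, h, map_zero]))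
  let φ : Polynomial (Polynomial K) →+* Polynomial (Polynomial ℂ) :=
    Polynomial.mapRingHom (Polynomial.mapRingHom i)
  have hφinj : Function.Injective φ :=
    Polynomial.map_injective _ (Polynomial.map_injective _ hi)
  have hnat : ∀ f₀ : MvPolynomial (Fin 2) K, φ (toBiv f₀) = toBiv (MvPolynomial.map i f₀) := by
    intro f₀
    have h : φ.comp (toBiv (R := K)) = (toBiv (R := ℂ)).comp (MvPolynomial.map i) := by
      apply MvPolynomial.ringHom_ext
      · intro a; simp [φ]
      · intro n; rcases fin2_cases n with rfl | rfl <;> simp [φ]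
    exact DFunLike.congr_fun h f₀
  have hφp : φ p₁ = toBiv p := by rw [hp₁, hnat p₀, hp₀]
  have hP₂ : Irreducible (toBiv p) := irreducible_mulEquiv (bivEquiv (R := ℂ)).toMulEquiv hirr
  have hud : ∀ w : Polynomial (Polynomial K), IsUnit (φ w) → IsUnit w := by
    intro w hw
    have h1 : (φ w).natDegree = 0 := Polynomial.natDegree_eq_zero_of_isUnit hw
    have h2 : w.natDegree = 0 := by
      rwa [show φ w = Polynomial.map (Polynomial.mapRingHom i) w from rfl,
        Polynomial.natDegree_map_eq_of_injective (Polynomial.map_injective _ hi)] at h1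
    rw [Polynomial.eq_C_of_natDegree_eq_zero h2] at hw ⊢
    rw [show φ (Polynomial.C (w.coeff 0)) = Polynomial.C (Polynomial.map i (w.coeff 0)) from by
      simp [φ]] at hw
    have h3 : IsUnit (Polynomial.map i (w.coeff 0)) := Polynomial.isUnit_C.mp hw
    have h4 : (w.coeff 0).natDegree = 0 := by
      have h5 := Polynomial.natDegree_eq_zero_of_isUnit h3
      rwa [Polynomial.natDegree_map_eq_of_injective hi] at h5
    rw [Polynomial.eq_C_of_natDegree_eq_zero h4] at h3 ⊢
    rw [Polynomial.map_C] at h3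
    have h5 : IsUnit (i ((w.coeff 0).coeff 0)) := Polynomial.isUnit_C.mp h3
    have h6 : ((w.coeff 0).coeff 0) ≠ 0 := by
      intro h0; rw [h0, map_zero] at h5; exact not_isUnit_zero h5
    exact Polynomial.isUnit_C.mpr (Polynomial.isUnit_C.mpr (isUnit_iff_ne_zero.2 h6))
  have hp₁irr : Irreducible p₁ := by
    constructor
    · intro h
      exact hP₂.not_isUnit (hφp ▸ h.map φ)
    · intro a b hab
      have h2 : toBiv p = φ a * φ b := by rw [← hφp, hab, map_mul]
      rcases hP₂.isUnit_or_isUnit h2 with h | h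
      · exact Or.inl (hud a h)
      · exact Or.inr (hud b h)
  have hdp1 : p₁.natDegree = p.degreeOf 0 := by
    rw [hp₁, natDegree_toBiv p₀ hp₀ne, ← hp₀, hdeg]
  have hdq1 : q₁.natDegree = q.degreeOf 0 := by
    rw [hq₁, natDegree_toBiv q₀ hq₀ne, ← hq₀, hdeg]
  have hprim : p₁.IsPrimitive := by
    intro r hr
    obtain ⟨t, ht⟩ := hr
    rcases hp₁irr.isUnit_or_isUnit ht with h | h
    · exact Polynomial.isUnit_C.mp h
    · exfalso
      have h1 : t.natDegree = 0 := Polynomial.natDegree_eq_zero_of_isUnit h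
      have h2 : p₁.natDegree ≤ 0 := by
        rw [ht]
        refine le_trans (Polynomial.natDegree_mul_le) ?_
        simp [h1]
      rw [hdp1] at h2
      omega
  let F := FractionRing (Polynomial K)
  let ρ : Polynomial K →+* F := algebraMap _ _
  have hρinj : Function.Injective ρ := IsFractionRing.injective _ _
  have hp2irr : Irreducible (p₁.map ρ) :=
    (hprim.irreducible_iff_irreducible_map_fraction_map (K := F)).mp hp₁irr
  have hcs : ∀ (s : Polynomial K) (r : Polynomial F), s • r = Polynomial.C (ρ s) * r := by
    intro s r
    ext n
    rw [Polynomial.coeff_smul, Polynomial.coeff_C_mul, Algebra.smul_def]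
  by_cases hdvd : p₁.map ρ ∣ q₁.map ρ
  · exfalso
    obtain ⟨r, hr⟩ := hdvd
    obtain ⟨s, hs⟩ := IsLocalization.integerNormalization_map_to_map
      (nonZeroDivisors (Polynomial K)) r
    have hdvd2 : p₁ ∣ q₁ * Polynomial.C (s : Polynomial K) := by
      refine ⟨IsLocalization.integerNormalization (nonZeroDivisors (Polynomial K)) r, ?_⟩
      apply Polynomial.map_injective ρ hρinj
      rw [Polynomial.map_mul, Polynomial.map_mul, Polynomial.map_C, hs, hcs, hr]
      ring
    have hps : Prime p₁ := (UniqueFactorizationMonoid.irreducible_iff_prime).mp hp₁irr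
    have hs0 : (s : Polynomial K) ≠ 0 := nonZeroDivisors.coe_ne_zero s
    rcases hps.2.2 _ _ hdvd2 with h | h
    · obtain ⟨t₁, ht₁⟩ := h
      have ht₁ne : t₁ ≠ 0 := by
        intro h0; rw [h0, mul_zero] at ht₁; exact hq₁ne ht₁
      have hndmul : q₁.natDegree = p₁.natDegree + t₁.natDegree := by
        rw [ht₁, Polynomial.natDegree_mul hp₁ne ht₁ne]
      have ht₁0 : t₁.natDegree = 0 := by rw [hdq1, hdp1] at hndmul; omega
      have ht₁C : t₁ = Polynomial.C (t₁.coeff 0) := Polynomial.eq_C_of_natDegree_eq_zero ht₁0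
      set s₁ := t₁.coeff 0 with hs₁def
      have hs₁ne : s₁ ≠ 0 := by
        intro h0; rw [ht₁C, h0, map_zero] at ht₁ne; exact ht₁ne rfl
      obtain ⟨j, hj0, hjd⟩ := exists_coeff_toBiv_natDegree p₀ hp₀ne
      have hcf : q₁.coeff j = p₁.coeff j * s₁ := by
        rw [ht₁, ht₁C, Polynomial.coeff_mul_C]
      have hsnd : (q₁.coeff j).natDegree = (p₁.coeff j).natDegree + s₁.natDegree := by
        rw [hcf, Polynomial.natDegree_mul (by rw [hp₁]; exact hj0) hs₁ne]
      have hle : (q₁.coeff j).natDegree ≤ q₀.degreeOf 1 := by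
        rw [hq₁]; exact natDegree_coeff_toBiv_le q₀ j
      have hq0d : q₀.degreeOf 1 = q.degreeOf 1 := by rw [← hq₀, hdeg]
      have hp0d : p₀.degreeOf 1 = p.degreeOf 1 := by rw [← hp₀, hdeg]
      have hjd' : (p₁.coeff j).natDegree = p.degreeOf 1 := by
        rw [hp₁, hjd, hp0d]
      have hs₁0 : s₁.natDegree = 0 := by
        rw [hjd'] at hsnd
        rw [hq0d] at hle
        omega
      have hs₁C : s₁ = Polynomial.C (s₁.coeff 0) := Polynomial.eq_C_of_natDegree_eq_zero hs₁0
      set c := s₁.coeff 0 with hcdef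
      have hq₁eq : q₁ = p₁ * Polynomial.C (Polynomial.C c) := by
        rw [ht₁, ht₁C, hs₁C]
      have hq₀eq : q₀ = p₀ * MvPolynomial.C c := by
        have h7 := congrArg ofBiv hq₁eq
        rw [map_mul, hq₁, hp₁, ofBiv_toBiv, ofBiv_toBiv, ofBiv_CC] at h7
        exact h7
      exact hne ⟨i c, by rw [← hq₀, hq₀eq, map_mul, hp₀, MvPolynomial.map_C]; ring⟩
    · have h8 := Polynomial.natDegree_le_of_dvd h (Polynomial.C_ne_zero.mpr hs0)
      rw [Polynomial.natDegree_C, hdp1] at h8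
      omega
  · have hcop : IsCoprime (p₁.map ρ) (q₁.map ρ) := (hp2irr.coprime_iff_not_dvd).mpr hdvd
    obtain ⟨u, v, huv⟩ := hcop
    obtain ⟨cu, hcu⟩ := IsLocalization.integerNormalization_map_to_map
      (nonZeroDivisors (Polynomial K)) u
    obtain ⟨cv, hcv⟩ := IsLocalization.integerNormalization_map_to_map
      (nonZeroDivisors (Polynomial K)) v
    have key : (Polynomial.C (cv : Polynomial K)
          * IsLocalization.integerNormalization (nonZeroDivisors (Polynomial K)) u) * p₁
        + (Polynomial.C (cu : Polynomial K)
          * IsLocalization.integerNormalization (nonZeroDivisors (Polynomial K)) v) * q₁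
        = Polynomial.C ((cu : Polynomial K) * (cv : Polynomial K)) := by
      apply Polynomial.map_injective ρ hρinj
      rw [Polynomial.map_add, Polynomial.map_mul, Polynomial.map_mul, Polynomial.map_mul,
        Polynomial.map_mul, Polynomial.map_C, Polynomial.map_C, Polynomial.map_C,
        hcu, hcv, hcs, hcs, map_mul]
      have h9 : (Polynomial.C (ρ cv) * (Polynomial.C (ρ cu) * u)) * (p₁.map ρ)
          + (Polynomial.C (ρ cu) * (Polynomial.C (ρ cv) * v)) * (q₁.map ρ)
          = Polynomial.C (ρ cu) * Polynomial.C (ρ cv)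
            * (u * p₁.map ρ + v * q₁.map ρ) := by ring
      rw [h9, huv, mul_one, Polynomial.C_mul]
    let ev : Polynomial (Polynomial K) →+* ℂ :=
      Polynomial.eval₂RingHom (Polynomial.eval₂RingHom i β) α
    have hev : ∀ f₀ : MvPolynomial (Fin 2) K,
        ev (toBiv f₀) = MvPolynomial.eval ![α, β] (MvPolynomial.map i f₀) := by
      intro f₀
      rw [MvPolynomial.eval_map]
      have h : ev.comp (toBiv (R := K)) = MvPolynomial.eval₂Hom i ![α, β] := by
        apply MvPolynomial.ringHom_ext
        · intro a; simp [ev]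
        · intro n; rcases fin2_cases n with rfl | rfl <;> simp [ev]
      exact DFunLike.congr_fun h f₀
    have hevp : ev p₁ = 0 := by
      have h10 := hev p₀
      rw [hp₀] at h10
      rw [hp₁, h10, hpz]
    have hevq : ev q₁ = 0 := by
      have h10 := hev q₀
      rw [hq₀] at h10
      rw [hq₁, h10, hqz]
    have hkey := congrArg ev key
    simp only [map_add, map_mul] at hkey
    rw [hevp, hevq, mul_zero, mul_zero, add_zero] at hkey
    have hkey2 : Polynomial.eval₂ i β ((cu : Polynomial K) * (cv : Polynomial K)) = 0 := by
      have h11 : ∀ w : Polynomial K, ev (Polynomial.C w) = Polynomial.eval₂ i β w := by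
        intro w; simp [ev]
      rw [Polynomial.eval₂_mul, ← h11, ← h11, ← hkey]
    have hr0 : ((cu : Polynomial K) * (cv : Polynomial K)) ≠ 0 :=
      mul_ne_zero (nonZeroDivisors.coe_ne_zero cu) (nonZeroDivisors.coe_ne_zero cv)
    have halgK : IsAlgebraic K β := ⟨_, hr0, by rw [Polynomial.aeval_def]; exact hkey2⟩
    haveI hKint : Algebra.IsIntegral ℚ K := by
      haveI h1 : Algebra.IsAlgebraic ℚ K := algebraicClosure.isAlgebraic ℚ ℂ
      exact Algebra.isAlgebraic_iff_isIntegral.mp h1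
    have hint : IsIntegral K β := isAlgebraic_iff_isIntegral.mp halgK
    exact (isIntegral_trans (R := ℚ) β hint).isAlgebraic


lemma conj_isAlgebraic {z : ℂ} (h : IsAlgebraic ℚ z) :
    IsAlgebraic ℚ ((starRingEnd ℂ) z) := by
  obtain ⟨f, hf0, hf⟩ := h
  refine ⟨f, hf0, ?_⟩
  have h2 : (starRingEnd ℂ) (Polynomial.aeval z f) = 0 := by rw [hf, map_zero]
  rw [Polynomial.aeval_def, Polynomial.hom_eval₂] at h2
  rw [Polynomial.aeval_def,
    show algebraMap ℚ ℂ = ((starRingEnd ℂ)).comp (algebraMap ℚ ℂ) from RingHom.ext_rat _ _]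
  exact h2

end St17

open St17 in
theorem stmt17 (P : MvPolynomial (Fin 2) ℂ) (hirr : Irreducible P)
    (hdx : 0 < P.degreeOf 0) (hdy : 0 < P.degreeOf 1)
    (halg : ∀ m : Fin 2 →₀ ℕ, IsAlgebraic ℚ (MvPolynomial.coeff m P))
    -- there is no constant `c` with `P⋆ = c·P`
    (hnrec : ¬∃ c : ℂ, ∀ x y : ℂ, x ≠ 0 → y ≠ 0 →
      x ^ P.degreeOf 0 * y ^ P.degreeOf 1 *
        (starRingEnd ℂ)
          (MvPolynomial.eval ![1 / (starRingEnd ℂ) x, 1 / (starRingEnd ℂ) y] P)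
        = c * MvPolynomial.eval ![x, y] P) :
    ∀ α β : ℂ, ‖α‖ = 1 → ‖β‖ = 1 →
      MvPolynomial.eval ![α, β] P = 0 → IsAlgebraic ℚ α ∧ IsAlgebraic ℚ β := by
  intro α β hα hβ heval
  classical
  have hα0 : α ≠ 0 := by intro h; rw [h] at hα; simp at hα
  have hβ0 : β ≠ 0 := by intro h; rw [h] at hβ; simp at hβ
  have hcα : (starRingEnd ℂ) α = α⁻¹ := by
    refine eq_inv_of_mul_eq_one_right ?_
    rw [Complex.mul_conj, Complex.normSq_eq_norm_sq, hα]
    norm_num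
  have hcβ : (starRingEnd ℂ) β = β⁻¹ := by
    refine eq_inv_of_mul_eq_one_right ?_
    rw [Complex.mul_conj, Complex.normSq_eq_norm_sq, hβ]
    norm_num
  have h1α : 1 / (starRingEnd ℂ) α = α := by rw [hcα, one_div, inv_inv]
  have h1β : 1 / (starRingEnd ℂ) β = β := by rw [hcβ, one_div, inv_inv]
  set Q : MvPolynomial (Fin 2) ℂ := ∑ m ∈ P.support,
    MvPolynomial.monomial (sg (P.degreeOf 0 - m 0) (P.degreeOf 1 - m 1))
      ((starRingEnd ℂ) (P.coeff m)) with hQdef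
  have hQeval : ∀ x y : ℂ, x ≠ 0 → y ≠ 0 →
      MvPolynomial.eval ![x, y] Q
        = x ^ P.degreeOf 0 * y ^ P.degreeOf 1 *
          (starRingEnd ℂ)
            (MvPolynomial.eval ![1 / (starRingEnd ℂ) x, 1 / (starRingEnd ℂ) y] P) := by
    intro x y hx hy
    rw [hQdef, map_sum, MvPolynomial.eval_eq', map_sum, Finset.mul_sum]
    refine Finset.sum_congr rfl fun m hm => ?_
    have h0 : m 0 ≤ P.degreeOf 0 := MvPolynomial.monomial_le_degreeOf 0 hm
    have h1 : m 1 ≤ P.degreeOf 1 := MvPolynomial.monomial_le_degreeOf 1 hm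
    rw [MvPolynomial.eval_monomial, Finsupp.prod_fintype _ _ (fun i => pow_zero _),
      Fin.prod_univ_two, sg_apply0, sg_apply1, Fin.prod_univ_two]
    simp only [Matrix.cons_val_zero, Matrix.cons_val_one, Matrix.head_cons, map_mul, map_pow,
      map_div₀, map_one, Complex.conj_conj]
    rw [pow_sub₀ x hx h0, pow_sub₀ y hy h1, one_div, one_div, inv_pow, inv_pow]
    ring
  have hQz : MvPolynomial.eval ![α, β] Q = 0 := by
    rw [hQeval α β hα0 hβ0,
      show (![1 / (starRingEnd ℂ) α, 1 / (starRingEnd ℂ) β] : Fin 2 → ℂ) = ![α, β] by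
        funext i; rcases fin2_cases i with rfl | rfl <;> simp [h1α, h1β],
      heval, map_zero, mul_zero]
  have hQalg : ∀ m : Fin 2 →₀ ℕ, IsAlgebraic ℚ (MvPolynomial.coeff m Q) := by
    intro m'
    have hmem : MvPolynomial.coeff m' Q ∈ algebraicClosure ℚ ℂ := by
      rw [hQdef, MvPolynomial.coeff_sum]
      refine sum_mem fun m hm => ?_
      rw [MvPolynomial.coeff_monomial]
      split
      · exact mem_algebraicClosure_iff.2 (conj_isAlgebraic (halg m))
      · exact zero_mem _
    exact mem_algebraicClosure_iff.1 hmem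
  have hQsupp : ∀ m ∈ Q.support, m 0 ≤ P.degreeOf 0 ∧ m 1 ≤ P.degreeOf 1 := by
    intro m hm
    have hc := MvPolynomial.mem_support_iff.1 hm
    rw [hQdef, MvPolynomial.coeff_sum] at hc
    obtain ⟨m₀, hm₀, hne0⟩ := Finset.exists_ne_zero_of_sum_ne_zero hc
    rw [MvPolynomial.coeff_monomial] at hne0
    have heq : sg (P.degreeOf 0 - m₀ 0) (P.degreeOf 1 - m₀ 1) = m := by
      by_contra h; rw [if_neg h] at hne0; exact hne0 rfl
    rw [← heq]
    constructor
    · rw [sg_apply0]; omega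
    · rw [sg_apply1]; omega
  have hQd0 : Q.degreeOf 0 ≤ P.degreeOf 0 := by
    rw [MvPolynomial.degreeOf_eq_sup]
    exact Finset.sup_le fun m hm => (hQsupp m hm).1
  have hQd1 : Q.degreeOf 1 ≤ P.degreeOf 1 := by
    rw [MvPolynomial.degreeOf_eq_sup]
    exact Finset.sup_le fun m hm => (hQsupp m hm).2
  have hne : ¬ ∃ c : ℂ, Q = MvPolynomial.C c * P := by
    rintro ⟨c, hc⟩
    refine hnrec ⟨c, fun x y hx hy => ?_⟩
    rw [← hQeval x y hx hy, hc, map_mul, MvPolynomial.eval_C]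
  have hβalg : IsAlgebraic ℚ β := aux P Q hirr hdx hQd0 hQd1 halg hQalg hne heval hQz
  set σ : Fin 2 ≃ Fin 2 := Equiv.swap 0 1 with hσdef
  have hσσ : (⇑σ ∘ ⇑σ) = id := by
    funext a; simp [hσdef, Equiv.swap_apply_self]
  have hdd : ∀ m : Fin 2 →₀ ℕ, Finsupp.mapDomain ⇑σ (Finsupp.mapDomain ⇑σ m) = m := by
    intro m
    rw [← Finsupp.mapDomain_comp, hσσ, Finsupp.mapDomain_id]
  have hRR : ∀ f : MvPolynomial (Fin 2) ℂ,
      MvPolynomial.rename ⇑σ (MvPolynomial.rename ⇑σ f) = f := by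
    intro f
    rw [MvPolynomial.rename_rename, hσσ, MvPolynomial.rename_id, AlgHom.id_apply]
  have hcoeffR : ∀ (f : MvPolynomial (Fin 2) ℂ) (m : Fin 2 →₀ ℕ),
      MvPolynomial.coeff m (MvPolynomial.rename ⇑σ f)
        = MvPolynomial.coeff (Finsupp.mapDomain ⇑σ m) f := by
    intro f m
    conv_lhs => rw [← hdd m]
    rw [MvPolynomial.coeff_rename_mapDomain ⇑σ σ.injective]
  have hvec : ∀ x y : ℂ, ((![y, x] : Fin 2 → ℂ) ∘ ⇑σ) = ![x, y] := by
    intro x y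
    funext i
    rcases fin2_cases i with rfl | rfl <;>
      simp [hσdef, Equiv.swap_apply_left, Equiv.swap_apply_right]
  have hirr' : Irreducible (MvPolynomial.rename ⇑σ P) :=
    irreducible_mulEquiv (MvPolynomial.renameEquiv ℂ σ).toRingEquiv.toMulEquiv hirr
  have hdeg0' : ∀ f : MvPolynomial (Fin 2) ℂ,
      (MvPolynomial.rename ⇑σ f).degreeOf 0 = f.degreeOf 1 := by
    intro f
    have h := MvPolynomial.degreeOf_rename_of_injective (p := f) σ.injective 1
    rw [show σ 1 = 0 from Equiv.swap_apply_right 0 1] at h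
    exact h
  have hdeg1' : ∀ f : MvPolynomial (Fin 2) ℂ,
      (MvPolynomial.rename ⇑σ f).degreeOf 1 = f.degreeOf 0 := by
    intro f
    have h := MvPolynomial.degreeOf_rename_of_injective (p := f) σ.injective 0
    rw [show σ 0 = 1 from Equiv.swap_apply_left 0 1] at h
    exact h
  have hne' : ¬ ∃ c : ℂ, MvPolynomial.rename ⇑σ Q
      = MvPolynomial.C c * MvPolynomial.rename ⇑σ P := by
    rintro ⟨c, hc⟩
    refine hne ⟨c, ?_⟩
    have h := congrArg (MvPolynomial.rename ⇑σ) hc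
    rw [hRR, map_mul, hRR, MvPolynomial.rename_C] at h
    exact h
  have hPz' : MvPolynomial.eval ![β, α] (MvPolynomial.rename ⇑σ P) = 0 := by
    rw [MvPolynomial.eval_rename, hvec, heval]
  have hQz' : MvPolynomial.eval ![β, α] (MvPolynomial.rename ⇑σ Q) = 0 := by
    rw [MvPolynomial.eval_rename, hvec, hQz]
  have hαalg : IsAlgebraic ℚ α := by
    refine aux (MvPolynomial.rename ⇑σ P) (MvPolynomial.rename ⇑σ Q) hirr' ?_ ?_ ?_ ?_ ?_ hne'
      hPz' hQz'
    · rw [hdeg0']; exact hdy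
    · rw [hdeg0', hdeg0']; exact hQd1
    · rw [hdeg1', hdeg1']; exact hQd0
    · intro m; rw [hcoeffR]; exact halg _
    · intro m; rw [hcoeffR]; exact hQalg _
  exact ⟨hαalg, hβalg⟩
end
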